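/- arXiv:1604.01743 — 2 statements merged into one kernel-verified Lean document; each statement's English description precedes it below -/
import Mathlib

section
/- Let E be an AL-space, (T_t)_{t∈J} a bounded positive semigroup (J = ℕ or (0,∞)), and ε > 0. Then the following are equivalent: (i) (T_t) converges strongly to an operator P with ‖Pf‖ ≥ ε‖f‖ for all f ∈ E₊; (ii) for every normalised f ∈ E₊ there is an individual lower bound h_f for (T,f) with ‖h_f‖ ≥ ε. -/
open Filter Topology

section LatticeFacts
variable {E : Type*} [NormedAddCommGroup E] [Lattice E] [HasSolidNorm E] [IsOrderedAddMonoid E]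

lemma gg_norm_mono {a b : E} (h : 0 ≤ a) (h2 : a ≤ b) : ‖a‖ ≤ ‖b‖ :=
  norm_le_norm_of_abs_le_abs (by rw [abs_of_nonneg h, abs_of_nonneg (h.trans h2)]; exact h2)

lemma gg_neg_le_negPart (v : E) : -v ≤ v⁻ := by rw [negPart_def]; exact le_sup_left

lemma gg_le_posPart (v : E) : v ≤ v⁺ := by rw [posPart_def]; exact le_sup_left

lemma gg_norm_negPart_le (a : E) : ‖a⁻‖ ≤ ‖a‖ := by
  refine norm_le_norm_of_abs_le_abs ?_
  rw [abs_of_nonneg (negPart_nonneg a), ← posPart_add_negPart a]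
  exact le_add_of_nonneg_left (posPart_nonneg a)

lemma gg_norm_negPart_sub (a b : E) : ‖a⁻ - b⁻‖ ≤ ‖a - b‖ := by
  refine norm_le_norm_of_abs_le_abs ?_
  rw [negPart_def, negPart_def]
  calc |(-a ⊔ 0) - (-b ⊔ 0)| ≤ |(-a) - (-b)| := abs_sup_sub_sup_le_abs _ _ _
    _ = |a - b| := by rw [neg_sub_neg, abs_sub_comm]

lemma gg_norm_negPart_le_add (a b : E) : ‖a⁻‖ ≤ ‖b⁻‖ + ‖a - b‖ := by
  calc ‖a⁻‖ = ‖b⁻ + (a⁻ - b⁻)‖ := by rw [add_sub_cancel]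
    _ ≤ ‖b⁻‖ + ‖a⁻ - b⁻‖ := norm_add_le _ _
    _ ≤ ‖b⁻‖ + ‖a - b‖ := by have := gg_norm_negPart_sub a b; linarith

lemma gg_sup_zero_add (p q : E) : (p ⊔ q) ⊔ (0 : E) = (p ⊔ 0) ⊔ (q ⊔ 0) := by
  rw [sup_sup_sup_comm, sup_idem]

lemma gg_negPart_sub_sup (x a b : E) : (x - a ⊔ b)⁻ = (x - a)⁻ ⊔ (x - b)⁻ := by
  have h1 : a ⊔ b - x = (a - x) ⊔ (b - x) := by
    simp only [sub_eq_add_neg, sup_add]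
  rw [negPart_def, negPart_def, negPart_def, neg_sub, neg_sub, neg_sub, h1, gg_sup_zero_add]

lemma gg_negPart_sub_le (v w : E) (hw : 0 ≤ w) : (v - w)⁻ ≤ v⁻ + w := by
  rw [negPart_def (v - w)]
  refine sup_le ?_ (add_nonneg (negPart_nonneg v) hw)
  rw [neg_sub, sub_eq_add_neg, add_comm]
  exact add_le_add_left (gg_neg_le_negPart v) w

lemma gg_sup_eq_add_posPart (a b : E) : a ⊔ b = b + (a - b)⁺ := by
  rw [posPart_def, add_sup, add_zero, add_sub_cancel, sup_comm]

lemma gg_opMono [NormedSpace ℝ E] (A : E →L[ℝ] E) (hA : ∀ v : E, 0 ≤ v → 0 ≤ A v) {v w : E} (h : v ≤ w) :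
    A v ≤ A w := by
  have h2 := hA (w - v) (sub_nonneg.2 h)
  rw [map_sub] at h2
  exact sub_nonneg.1 h2

lemma gg_opNegPart [NormedSpace ℝ E] (A : E →L[ℝ] E) (hA : ∀ v : E, 0 ≤ v → 0 ≤ A v) (v : E) :
    (A v)⁻ ≤ A v⁻ := by
  rw [negPart_def]
  refine sup_le ?_ (hA _ (negPart_nonneg v))
  have h2 := gg_opMono A hA (gg_neg_le_negPart v)
  rwa [map_neg] at h2

end LatticeFacts

section ALFacts
variable {E : Type*} [NormedAddCommGroup E] [Lattice E] [HasSolidNorm E] [IsOrderedAddMonoid E]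

lemma gg_key (hAL : ∀ f g : E, 0 ≤ f → 0 ≤ g → ‖f + g‖ = ‖f‖ + ‖g‖)
    (a b : E) (ha : 0 ≤ a) (hb : 0 ≤ b) :
    ‖(a - b)⁺‖ + ‖b‖ = ‖(a - b)⁻‖ + ‖a‖ := by
  have h1 : (a - b)⁺ + b = (a - b)⁻ + a := by
    have h := posPart_sub_negPart (a - b)
    have h2 : (a - b)⁺ - (a - b)⁻ = a - b := h
    rw [sub_eq_sub_iff_add_eq_add] at h2
    rw [h2, add_comm]
  calc ‖(a - b)⁺‖ + ‖b‖ = ‖(a - b)⁺ + b‖ := (hAL _ _ (posPart_nonneg _) hb).symm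
    _ = ‖(a - b)⁻ + a‖ := by rw [h1]
    _ = ‖(a - b)⁻‖ + ‖a‖ := hAL _ _ (negPart_nonneg _) ha

lemma gg_le_norm_add (hAL : ∀ f g : E, 0 ≤ f → 0 ≤ g → ‖f + g‖ = ‖f‖ + ‖g‖)
    {h x : E} (hh : 0 ≤ h) (hx : 0 ≤ x) : ‖h‖ ≤ ‖x‖ + ‖(x - h)⁻‖ := by
  have h0 : h - x ≤ (x - h)⁻ := by
    rw [← posPart_neg (x - h), neg_sub]
    exact gg_le_posPart _
  have h1 : h ≤ x + (x - h)⁻ := sub_le_iff_le_add'.1 h0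
  calc ‖h‖ ≤ ‖x + (x - h)⁻‖ := gg_norm_mono hh h1
    _ = ‖x‖ + ‖(x - h)⁻‖ := hAL _ _ hx (negPart_nonneg _)

lemma gg_al_mono_norm (hAL : ∀ f g : E, 0 ≤ f → 0 ≤ g → ‖f + g‖ = ‖f‖ + ‖g‖)
    {a b : E} (ha : 0 ≤ a) (h : a ≤ b) : ‖b‖ = ‖a‖ + ‖b - a‖ := by
  have : ‖a + (b - a)‖ = ‖a‖ + ‖b - a‖ := hAL _ _ ha (sub_nonneg.2 h)
  rwa [add_sub_cancel] at this

end ALFacts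

section SmulFacts
variable {E : Type*} [NormedAddCommGroup E] [Lattice E] [HasSolidNorm E] [IsOrderedAddMonoid E]

lemma gg_inf_zero_add {a b c : E} (ha : 0 ≤ a) (hb : 0 ≤ b) (hc : 0 ≤ c)
    (h1 : a ⊓ c = 0) (h2 : b ⊓ c = 0) : (a + b) ⊓ c = 0 := by
  refine le_antisymm ?_ (le_inf (add_nonneg ha hb) hc)
  have e1 : (a + b) ⊓ c ≤ (a + b) ⊓ (c + b) := inf_le_inf_left _ (le_add_of_nonneg_right hb)
  have e2 : (a + b) ⊓ (c + b) = a ⊓ c + b := by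
    rw [add_comm (a ⊓ c) b, add_inf, add_comm b a, add_comm b c]
  have e3 : (a + b) ⊓ c ≤ b := by rw [e2, h1, zero_add] at e1; exact e1
  calc (a + b) ⊓ c ≤ b ⊓ c := le_inf e3 inf_le_right
    _ = 0 := h2

lemma gg_inf_zero_nsmul {a c : E} (ha : 0 ≤ a) (hc : 0 ≤ c) (h : a ⊓ c = 0) :
    ∀ n : ℕ, (n • a) ⊓ c = 0 := by
  intro n
  induction n with
  | zero => rw [zero_smul]; exact inf_eq_left.2 hc
  | succ n ih =>
      rw [succ_nsmul]
      exact gg_inf_zero_add (nsmul_nonneg ha n) ha hc ih h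

lemma gg_nonneg_of_nsmul {y : E} {n : ℕ} (hn : n ≠ 0) (h : 0 ≤ n • y) : 0 ≤ y := by
  have hd : y⁺ ⊓ y⁻ = 0 := posPart_inf_negPart_eq_zero y
  have hle : n • y⁻ ≤ n • y⁺ := by
    have h2 : 0 ≤ n • y⁺ - n • y⁻ := by
      rw [← nsmul_sub, posPart_sub_negPart]; exact h
    exact sub_nonneg.1 h2
  have hd1 : (n • y⁻) ⊓ y⁺ = 0 := by
    rw [inf_comm] at hd
    exact gg_inf_zero_nsmul (negPart_nonneg y) (posPart_nonneg y) hd n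
  have hd2 : (n • y⁺) ⊓ (n • y⁻) = 0 := by
    rw [inf_comm] at hd1
    exact gg_inf_zero_nsmul (posPart_nonneg y) (nsmul_nonneg (negPart_nonneg y) n) hd1 n
  have hz : n • y⁻ = 0 := by
    have : (n • y⁻) ⊓ (n • y⁺) = n • y⁻ := inf_eq_left.2 hle
    rw [inf_comm] at this
    rw [← this, hd2]
  have hy : y⁻ ≤ 0 := by
    obtain ⟨m, rfl⟩ := Nat.exists_eq_succ_of_ne_zero hn
    rw [succ_nsmul] at hz
    calc y⁻ ≤ m • y⁻ + y⁻ := le_add_of_nonneg_left (nsmul_nonneg (negPart_nonneg y) m)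
      _ = 0 := hz
  have : y⁻ = 0 := le_antisymm hy (negPart_nonneg y)
  exact negPart_eq_zero.1 this

variable [NormedSpace ℝ E]

lemma gg_smul_nonneg {c : ℝ} (hc : 0 ≤ c) {x : E} (hx : 0 ≤ x) : 0 ≤ c • x := by
  have hq : ∀ q : ℚ, 0 ≤ q → 0 ≤ (q : ℝ) • x := by
    intro q hq0
    have hden : (q.den : ℝ) • ((q : ℝ) • x) = (q.num.toNat : ℝ) • x := by
      rw [smul_smul]
      congr 1
      have hnum : ((q.num.toNat : ℤ) : ℝ) = (q.num : ℝ) := by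
        rw [Int.toNat_of_nonneg (Rat.num_nonneg.2 hq0)]
      rw [show ((q.num.toNat : ℝ)) = ((q.num.toNat : ℤ) : ℝ) by push_cast; ring, hnum]
      exact_mod_cast (by rw [mul_comm, Rat.mul_den_eq_num] : (q.den : ℚ) * q = (q.num : ℚ))
    have h1 : 0 ≤ (q.num.toNat : ℝ) • x := by
      rw [Nat.cast_smul_eq_nsmul]
      exact nsmul_nonneg hx _
    have h2 : 0 ≤ (q.den : ℝ) • ((q : ℝ) • x) := hden ▸ h1
    rw [Nat.cast_smul_eq_nsmul] at h2
    exact gg_nonneg_of_nsmul q.den_nz h2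
  have hseq : ∀ k : ℕ, ∃ q : ℚ, c < (q : ℝ) ∧ (q : ℝ) < c + 1 / (k + 1) := by
    intro k
    have : c < c + 1 / ((k : ℝ) + 1) := by
      have : (0 : ℝ) < 1 / ((k : ℝ) + 1) := by positivity
      linarith
    exact exists_rat_btwn this
  choose qs hq1 hq2 using hseq
  have hlim : Tendsto (fun k : ℕ => ((qs k : ℝ)) • x) atTop (𝓝 (c • x)) := by
    have h1 : Tendsto (fun k : ℕ => ((qs k : ℝ))) atTop (𝓝 c) := by
      have hup : Tendsto (fun k : ℕ => c + 1 / ((k : ℝ) + 1)) atTop (𝓝 c) := by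
        have := tendsto_one_div_add_atTop_nhds_zero_nat (𝕜 := ℝ)
        have h2 := this.const_add c
        simpa using h2
      exact tendsto_of_tendsto_of_tendsto_of_le_of_le tendsto_const_nhds hup
        (fun k => (hq1 k).le) (fun k => (hq2 k).le)
    exact h1.smul_const x
  refine ge_of_tendsto hlim (Eventually.of_forall fun k => hq (qs k) ?_)
  have := hq1 k
  exact_mod_cast le_of_lt (lt_of_le_of_lt hc this)

lemma gg_smul_mono {c : ℝ} (hc : 0 ≤ c) {x y : E} (h : x ≤ y) : c • x ≤ c • y := by
  have := gg_smul_nonneg hc (sub_nonneg.2 h)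
  rw [smul_sub] at this
  exact sub_nonneg.1 this

lemma gg_smul_sup {c : ℝ} (hc : 0 < c) (x y : E) : c • (x ⊔ y) = (c • x) ⊔ (c • y) := by
  refine le_antisymm ?_ (sup_le (gg_smul_mono hc.le le_sup_left) (gg_smul_mono hc.le le_sup_right))
  have h1 : x ⊔ y ≤ c⁻¹ • ((c • x) ⊔ (c • y)) := by
    refine sup_le ?_ ?_
    · have := gg_smul_mono (inv_nonneg.2 hc.le) (le_sup_left : c • x ≤ (c • x) ⊔ (c • y))
      rwa [inv_smul_smul₀ hc.ne'] at this
    · have := gg_smul_mono (inv_nonneg.2 hc.le) (le_sup_right : c • y ≤ (c • x) ⊔ (c • y))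
      rwa [inv_smul_smul₀ hc.ne'] at this
  have h2 := gg_smul_mono hc.le h1
  rwa [smul_inv_smul₀ hc.ne'] at h2

lemma gg_smul_negPart {c : ℝ} (hc : 0 < c) (x : E) : (c • x)⁻ = c • x⁻ := by
  rw [negPart_def, negPart_def, ← smul_neg, gg_smul_sup hc, smul_zero]

end SmulFacts

section Semigroup

variable {E : Type*} [NormedAddCommGroup E] [Lattice E] [HasSolidNorm E] [IsOrderedAddMonoid E] [NormedSpace ℝ E] [CompleteSpace E]
variable {J : Type*} [AddCommMonoid J] [LinearOrder J] [IsOrderedCancelAddMonoid J]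

/-- `h` is an individual (asymptotic) lower bound for the orbit of `g` under `T`. -/
def GGLB (T : J → E →L[ℝ] E) (g h : E) : Prop :=
  0 ≤ h ∧ Tendsto (fun t : J => ‖(T t g - h)⁻‖) atTop (𝓝 0)

lemma gg_tendsto_zero {α : Type*} {l : Filter α} {u : α → ℝ}
    (h0 : ∀ᶠ x in l, 0 ≤ u x) (h : ∀ δ : ℝ, 0 < δ → ∀ᶠ x in l, u x ≤ δ) :
    Tendsto u l (𝓝 0) := by
  rw [Metric.tendsto_nhds]
  intro δ hδ
  filter_upwards [h (δ/2) (by linarith), h0] with x hx h0x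
  rw [dist_zero_right, Real.norm_eq_abs, abs_of_nonneg h0x]
  linarith

lemma gg_ev_le {α : Type*} {l : Filter α} {u : α → ℝ} (h : Tendsto u l (𝓝 0))
    {δ : ℝ} (hδ : 0 < δ) : ∀ᶠ x in l, u x ≤ δ :=
  h.eventually (eventually_le_nhds hδ)

lemma gg_ev_pos (he : ∃ e : J, 0 < e) : ∀ᶠ t : J in atTop, 0 < t := by
  obtain ⟨e, hepos⟩ := he
  filter_upwards [eventually_ge_atTop e] with t ht
  exact hepos.trans_le ht

lemma gg_shift_tendsto {u : J} (hu : 0 ≤ u) : Tendsto (fun t : J => u + t) atTop atTop := by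
  refine tendsto_atTop.2 fun b => ?_
  filter_upwards [eventually_ge_atTop b] with t ht
  calc b ≤ t := ht
    _ ≤ u + t := le_add_of_nonneg_left hu

lemma gg_decomp (hsub : ∀ s t : J, s < t → ∃ u : J, 0 < u ∧ s + u = t)
    (he : ∃ e : J, 0 < e) (s : J) :
    ∀ᶠ t : J in atTop, ∃ u, 0 < u ∧ s + u = t := by
  obtain ⟨e, hepos⟩ := he
  filter_upwards [eventually_ge_atTop (s + e)] with t ht
  exact hsub s t ((lt_add_of_pos_right s hepos).trans_le ht)

lemma gg_ev_shift (s : J) {p : J → Prop} (hp : ∀ᶠ u in atTop, p u) :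
    ∀ᶠ t : J in atTop, ∀ u : J, s + u = t → p u := by
  obtain ⟨a, ha⟩ := eventually_atTop.1 hp
  refine eventually_atTop.2 ⟨s + a, fun t ht u hu => ?_⟩
  refine ha u ?_
  have h2 : s + a ≤ s + u := by rw [hu]; exact ht
  exact le_of_add_le_add_left h2

lemma gg_lb_scaled (T : J → E →L[ℝ] E) {ε : ℝ} (hε : 0 < ε)
    (hLB : ∀ f : E, 0 ≤ f → ‖f‖ = 1 → ∃ h : E, 0 ≤ h ∧ ε ≤ ‖h‖ ∧
      Tendsto (fun t : J => ‖(T t f - h)⁻‖) atTop (𝓝 0)) :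
    ∀ g : E, 0 ≤ g → ∃ h : E, GGLB T g h ∧ ε * ‖g‖ ≤ ‖h‖ := by
  intro g hg
  by_cases hg0 : g = 0
  · refine ⟨0, ⟨le_refl 0, ?_⟩, by simp [hg0]⟩
    have : (fun t : J => ‖(T t g - 0)⁻‖) = fun _ => (0 : ℝ) := by
      funext t
      simp [hg0]
    rw [this]
    exact tendsto_const_nhds
  · have hng : 0 < ‖g‖ := norm_pos_iff.2 hg0
    obtain ⟨h₀, h1, h2, h3⟩ := hLB (‖g‖⁻¹ • g)
      (gg_smul_nonneg (inv_nonneg.2 hng.le) hg)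
      (by rw [norm_smul, Real.norm_eq_abs, abs_of_pos (inv_pos.2 hng), inv_mul_cancel₀ hng.ne'])
    refine ⟨‖g‖ • h₀, ⟨gg_smul_nonneg hng.le h1, ?_⟩, ?_⟩
    · have hkey : ∀ t : J, ‖(T t g - ‖g‖ • h₀)⁻‖ = ‖g‖ * ‖(T t (‖g‖⁻¹ • g) - h₀)⁻‖ := by
        intro t
        have e1 : T t g - ‖g‖ • h₀ = ‖g‖ • (T t (‖g‖⁻¹ • g) - h₀) := by
          rw [map_smul, smul_sub, smul_inv_smul₀ hng.ne']
        rw [e1, gg_smul_negPart hng, norm_smul, Real.norm_eq_abs, abs_of_pos hng]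
      simp only [hkey]
      have := h3.const_mul ‖g‖
      simpa using this
    · rw [norm_smul, Real.norm_eq_abs, abs_of_pos hng, mul_comm ε ‖g‖]
      exact mul_le_mul_of_nonneg_left h2 hng.le

lemma gg_lb_norm_le (hAL : ∀ f g : E, 0 ≤ f → 0 ≤ g → ‖f + g‖ = ‖f‖ + ‖g‖)
    {T : J → E →L[ℝ] E}
    (hpos : ∀ t : J, 0 < t → ∀ f : E, 0 ≤ f → 0 ≤ T t f)
    {M : ℝ} (hM : ∀ t : J, 0 < t → ‖T t‖ ≤ M)
    (he : ∃ e : J, 0 < e)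
    {g h : E} (hg : 0 ≤ g) (hlb : GGLB T g h) : ‖h‖ ≤ M * ‖g‖ + 1 := by
  haveI : Nonempty J := ⟨he.choose⟩
  obtain ⟨hh, ht⟩ := hlb
  have hev := (gg_ev_le ht one_pos).and (gg_ev_pos he)
  obtain ⟨t, hle, ht0⟩ := hev.exists
  have h1 : ‖h‖ ≤ ‖T t g‖ + ‖(T t g - h)⁻‖ := gg_le_norm_add hAL hh (hpos t ht0 g hg)
  have h2 : ‖T t g‖ ≤ M * ‖g‖ := le_trans ((T t).le_opNorm g)
    (mul_le_mul_of_nonneg_right (hM t ht0) (norm_nonneg g))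
  linarith

lemma gg_lb_sup {T : J → E →L[ℝ] E} {g h₁ h₂ : E}
    (h1 : GGLB T g h₁) (h2 : GGLB T g h₂) : GGLB T g (h₁ ⊔ h₂) := by
  refine ⟨le_trans h1.1 le_sup_left, ?_⟩
  have hkey : ∀ t : J, ‖(T t g - h₁ ⊔ h₂)⁻‖ ≤ ‖(T t g - h₁)⁻‖ + ‖(T t g - h₂)⁻‖ := by
    intro t
    rw [gg_negPart_sub_sup]
    calc ‖(T t g - h₁)⁻ ⊔ (T t g - h₂)⁻‖ ≤ ‖(T t g - h₁)⁻ + (T t g - h₂)⁻‖ := by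
          refine gg_norm_mono (le_trans (negPart_nonneg _) le_sup_left) ?_
          exact sup_le (le_add_of_nonneg_right (negPart_nonneg _))
            (le_add_of_nonneg_left (negPart_nonneg _))
      _ ≤ ‖(T t g - h₁)⁻‖ + ‖(T t g - h₂)⁻‖ := norm_add_le _ _
  have hsum : Tendsto (fun t : J => ‖(T t g - h₁)⁻‖ + ‖(T t g - h₂)⁻‖) atTop (𝓝 0) := by
    have := h1.2.add h2.2
    simpa using this
  exact squeeze_zero' (Eventually.of_forall fun t => norm_nonneg _)
    (Eventually.of_forall hkey) hsum

lemma gg_lb_shift {T : J → E →L[ℝ] E}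
    (hsg : ∀ s t : J, 0 < s → 0 < t → T (s + t) = (T s).comp (T t))
    (hpos : ∀ t : J, 0 < t → ∀ f : E, 0 ≤ f → 0 ≤ T t f)
    {M : ℝ} (hM : ∀ t : J, 0 < t → ‖T t‖ ≤ M)
    (he : ∃ e : J, 0 < e) (hsub : ∀ s t : J, s < t → ∃ u : J, 0 < u ∧ s + u = t)
    {g h : E} (hlb : GGLB T g h) {s : J} (hs : 0 < s) : GGLB T g (T s h) := by
  have hM0 : 0 ≤ M := le_trans (norm_nonneg (T s)) (hM s hs)
  refine ⟨hpos s hs h hlb.1, ?_⟩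
  refine gg_tendsto_zero (Eventually.of_forall fun t => norm_nonneg _) fun δ hδ => ?_
  have hδ' : 0 < δ / (M + 1) := by positivity
  have hev : ∀ᶠ u : J in atTop, 0 < u ∧ ‖(T u g - h)⁻‖ ≤ δ / (M + 1) :=
    (gg_ev_pos he).and (gg_ev_le hlb.2 hδ')
  filter_upwards [gg_ev_shift s hev, gg_decomp hsub he s] with t hall hdec
  obtain ⟨u, hu0, hsu⟩ := hdec
  obtain ⟨hu0', hub⟩ := hall u hsu
  have e1 : T t g = T s (T u g) := by
    rw [← hsu, hsg s u hs hu0]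
    rfl
  have e2 : (T t g - T s h)⁻ ≤ T s ((T u g - h)⁻) := by
    rw [e1, ← map_sub]
    exact gg_opNegPart (T s) (fun v hv => hpos s hs v hv) _
  calc ‖(T t g - T s h)⁻‖ ≤ ‖T s ((T u g - h)⁻)‖ := gg_norm_mono (negPart_nonneg _) e2
    _ ≤ M * ‖(T u g - h)⁻‖ := le_trans ((T s).le_opNorm _)
        (mul_le_mul_of_nonneg_right (hM s hs) (norm_nonneg _))
    _ ≤ M * (δ / (M + 1)) := mul_le_mul_of_nonneg_left hub hM0
    _ ≤ δ := by
        rw [mul_div_assoc']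
        rw [div_le_iff₀ (by linarith : (0:ℝ) < M + 1)]
        nlinarith

lemma gg_fixedlb
    (hAL : ∀ f g : E, 0 ≤ f → 0 ≤ g → ‖f + g‖ = ‖f‖ + ‖g‖)
    {T : J → E →L[ℝ] E}
    (hsg : ∀ s t : J, 0 < s → 0 < t → T (s + t) = (T s).comp (T t))
    (hpos : ∀ t : J, 0 < t → ∀ f : E, 0 ≤ f → 0 ≤ T t f)
    {M : ℝ} (hM : ∀ t : J, 0 < t → ‖T t‖ ≤ M)
    (he : ∃ e : J, 0 < e) (hsub : ∀ s t : J, s < t → ∃ u : J, 0 < u ∧ s + u = t)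
    {ε : ℝ} (hε : 0 < ε)
    (hLB : ∀ f : E, 0 ≤ f → ‖f‖ = 1 → ∃ h : E, 0 ≤ h ∧ ε ≤ ‖h‖ ∧
      Tendsto (fun t : J => ‖(T t f - h)⁻‖) atTop (𝓝 0))
    {g : E} (hg : 0 ≤ g) :
    ∃ p : E, GGLB T g p ∧ (∀ t : J, 0 < t → T t p = p) ∧ ε^2 * ‖g‖ ≤ ‖p‖ := by
  haveI : Nonempty J := ⟨he.choose⟩
  set A : Set ℝ := {r | ∃ h : E, GGLB T g h ∧ ‖h‖ = r} with hA
  have hAne : A.Nonempty := by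
    obtain ⟨h, hh, _⟩ := gg_lb_scaled T hε hLB g hg
    exact ⟨‖h‖, h, hh, rfl⟩
  have hAbdd : BddAbove A := by
    refine ⟨M * ‖g‖ + 1, ?_⟩
    rintro r ⟨h, hh, rfl⟩
    exact gg_lb_norm_le hAL hpos hM he hg hh
  set s₀ := sSup A with hs₀
  have hmem : ∀ {h : E}, GGLB T g h → ‖h‖ ≤ s₀ := fun hh => le_csSup hAbdd ⟨_, hh, rfl⟩
  have hs₀_ge : ε * ‖g‖ ≤ s₀ := by
    obtain ⟨h, hh, hn⟩ := gg_lb_scaled T hε hLB g hg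
    exact le_trans hn (hmem hh)
  have hseq : ∀ k : ℕ, ∃ h : E, GGLB T g h ∧ s₀ - 1/((k:ℝ)+1) < ‖h‖ := by
    intro k
    have hlt : s₀ - 1/((k:ℝ)+1) < s₀ := by
      have : (0:ℝ) < 1/((k:ℝ)+1) := by positivity
      linarith
    obtain ⟨r, ⟨h, hh, rfl⟩, hr⟩ := exists_lt_of_lt_csSup hAne hlt
    exact ⟨h, hh, hr⟩
  choose hs hhs hns using hseq
  set H : ℕ → E := fun k => Nat.rec (hs 0) (fun k Hk => Hk ⊔ hs (k+1)) k with hHdef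
  have hHlb : ∀ k, GGLB T g (H k) := by
    intro k
    induction k with
    | zero => exact hhs 0
    | succ k ih => exact gg_lb_sup ih (hhs (k+1))
  have hHmono : Monotone H := monotone_nat_of_le_succ (fun k => le_sup_left)
  have hHge : ∀ k : ℕ, s₀ - 1/((k:ℝ)+1) < ‖H k‖ := by
    intro k
    refine lt_of_lt_of_le (hns k) (gg_norm_mono (hhs k).1 ?_)
    cases k with
    | zero => exact le_refl _
    | succ k => exact le_sup_right
  have hHle : ∀ k, ‖H k‖ ≤ s₀ := fun k => hmem (hHlb k)
  have hHnorm : ∀ {k l : ℕ}, k ≤ l → ‖H l‖ = ‖H k‖ + ‖H l - H k‖ :=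
    fun h => gg_al_mono_norm hAL (hHlb _).1 (hHmono h)
  have hrmono : Monotone (fun k => ‖H k‖) := by
    intro k l h
    show ‖H k‖ ≤ ‖H l‖
    rw [hHnorm h]
    linarith [norm_nonneg (H l - H k)]
  obtain ⟨r₀, hr₀⟩ : ∃ r : ℝ, Tendsto (fun k => ‖H k‖) atTop (𝓝 r) :=
    ⟨_, tendsto_atTop_ciSup hrmono ⟨s₀, by rintro r ⟨k, rfl⟩; exact hHle k⟩⟩
  have hHcauchy : CauchySeq H := by
    rw [Metric.cauchySeq_iff]
    intro δ hδ
    have hrc := hr₀.cauchySeq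
    rw [Metric.cauchySeq_iff] at hrc
    obtain ⟨N, hN⟩ := hrc δ hδ
    refine ⟨N, fun m hm n hn => ?_⟩
    have key : ∀ a b : ℕ, N ≤ a → N ≤ b → b ≤ a → dist (H a) (H b) < δ := by
      intro a b ha hb hba
      have h1 := hHnorm hba
      have hd := hN a ha b hb
      rw [Real.dist_eq] at hd
      rw [dist_eq_norm]
      calc ‖H a - H b‖ = ‖H a‖ - ‖H b‖ := by linarith
        _ ≤ |‖H a‖ - ‖H b‖| := le_abs_self _
        _ < δ := hd
    rcases le_total n m with h | h
    · exact key m n hm hn h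
    · have := key n m hn hm h
      rwa [dist_comm] at this
  obtain ⟨hstar, hhstar⟩ := cauchySeq_tendsto_of_complete hHcauchy
  have hstar0 : 0 ≤ hstar := ge_of_tendsto hhstar (Eventually.of_forall fun k => (hHlb k).1)
  have hnormt : Tendsto (fun k => ‖H k‖) atTop (𝓝 ‖hstar‖) := hhstar.norm
  have hstar_le : ‖hstar‖ ≤ s₀ := le_of_tendsto hnormt (Eventually.of_forall hHle)
  have hklestar : ∀ k, ‖H k‖ ≤ ‖hstar‖ := by
    intro k
    refine ge_of_tendsto hnormt ?_
    filter_upwards [eventually_ge_atTop k] with l hl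
    exact hrmono hl
  have hstar_eq : ‖hstar‖ = s₀ := by
    refine le_antisymm hstar_le ?_
    by_contra hlt
    push_neg at hlt
    obtain ⟨k, hk⟩ := exists_nat_one_div_lt (sub_pos.2 hlt)
    have := hHge k
    have := hklestar k
    linarith
  have hstar_lb : GGLB T g hstar := by
    refine ⟨hstar0, gg_tendsto_zero (Eventually.of_forall fun t => norm_nonneg _) fun δ hδ => ?_⟩
    have h2 : Tendsto (fun k => ‖H k - hstar‖) atTop (𝓝 0) :=
      tendsto_iff_norm_sub_tendsto_zero.1 hhstar
    obtain ⟨k, hk⟩ := (gg_ev_le h2 (half_pos hδ)).exists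
    filter_upwards [gg_ev_le (hHlb k).2 (half_pos hδ)] with t ht
    calc ‖(T t g - hstar)⁻‖
        ≤ ‖(T t g - H k)⁻‖ + ‖(T t g - hstar) - (T t g - H k)‖ := gg_norm_negPart_le_add _ _
      _ = ‖(T t g - H k)⁻‖ + ‖H k - hstar‖ := by rw [sub_sub_sub_cancel_left]
      _ ≤ δ := by linarith
  have hmax : ∀ {h : E}, GGLB T g h → h ≤ hstar := by
    intro h hh
    have h1 : ‖h ⊔ hstar‖ ≤ s₀ := hmem (gg_lb_sup hh hstar_lb)
    have h3 : ‖h ⊔ hstar‖ = ‖hstar‖ + ‖(h - hstar)⁺‖ := by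
      rw [gg_sup_eq_add_posPart h hstar]
      exact hAL _ _ hstar0 (posPart_nonneg _)
    have h4 : ‖(h - hstar)⁺‖ ≤ 0 := by
      rw [hstar_eq] at h3
      linarith
    exact sub_nonpos.1 (posPart_eq_zero.1 (norm_le_zero_iff.1 h4))
  have hdec : ∀ s : J, 0 < s → T s hstar ≤ hstar := fun s hs =>
    hmax (gg_lb_shift hsg hpos hM he hsub hstar_lb hs)
  have hanti : ∀ s t : J, 0 < s → s ≤ t → T t hstar ≤ T s hstar := by
    intro s t hs hst
    rcases eq_or_lt_of_le hst with rfl | hlt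
    · exact le_refl _
    · obtain ⟨u, hu, rfl⟩ := hsub s t hlt
      rw [hsg s u hs hu]
      exact gg_opMono (T s) (hpos s hs) (hdec u hu)
  have hnormdec : ∀ s t : J, 0 < s → s ≤ t → ‖T s hstar‖ = ‖T t hstar‖ + ‖T s hstar - T t hstar‖ := by
    intro s t hs hst
    have ht0 : 0 < t := lt_of_lt_of_le hs hst
    exact gg_al_mono_norm hAL (hpos t ht0 _ hstar0) (hanti s t hs hst)
  set B : Set ℝ := {r | ∃ t : J, 0 < t ∧ ‖T t hstar‖ = r} with hB
  have hBne : B.Nonempty := ⟨‖T he.choose hstar‖, he.choose, he.choose_spec, rfl⟩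
  have hBbdd : BddBelow B := by
    refine ⟨0, ?_⟩
    rintro r ⟨t, ht, rfl⟩
    exact norm_nonneg _
  have horbcauchy : CauchySeq (fun t : J => T t hstar) := by
    rw [Metric.cauchySeq_iff]
    intro δ hδ
    have hc : sInf B < sInf B + δ/2 := by linarith
    obtain ⟨r, ⟨t₁, ht₁, hrdef⟩, hrlt⟩ := exists_lt_of_csInf_lt hBne hc
    refine ⟨t₁, fun m hm n hn => ?_⟩
    have key : ∀ a b : J, t₁ ≤ a → t₁ ≤ b → b ≤ a → dist (T a hstar) (T b hstar) < δ := by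
      intro a b ha hb hba
      have ha0 : 0 < a := lt_of_lt_of_le ht₁ ha
      have hb0 : 0 < b := lt_of_lt_of_le ht₁ hb
      have h1 : ‖T b hstar‖ = ‖T a hstar‖ + ‖T b hstar - T a hstar‖ := hnormdec b a hb0 hba
      have h2 : ‖T b hstar‖ ≤ ‖T t₁ hstar‖ := by
        have := hnormdec t₁ b ht₁ hb
        linarith [norm_nonneg (T t₁ hstar - T b hstar)]
      have h3 : sInf B ≤ ‖T a hstar‖ := csInf_le hBbdd ⟨a, ha0, rfl⟩
      rw [dist_eq_norm]
      have h5 : ‖T a hstar - T b hstar‖ = ‖T b hstar - T a hstar‖ := norm_sub_rev _ _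
      rw [h5]
      rw [← hrdef] at hrlt
      linarith
    rcases le_total n m with h | h
    · exact key m n hm hn h
    · have := key n m hn hm h
      rwa [dist_comm] at this
  obtain ⟨p, hp⟩ := cauchySeq_tendsto_of_complete horbcauchy
  have hp0 : 0 ≤ p := ge_of_tendsto hp (by
    filter_upwards [gg_ev_pos he] with t ht
    exact hpos t ht _ hstar0)
  have hpfix : ∀ w : J, 0 < w → T w p = p := by
    intro w hw
    have l1 : Tendsto (fun t : J => T w (T t hstar)) atTop (𝓝 (T w p)) :=
      ((T w).continuous.tendsto p).comp hp
    have l2 : Tendsto (fun t : J => T (w + t) hstar) atTop (𝓝 p) :=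
      hp.comp (gg_shift_tendsto hw.le)
    have l3 : (fun t : J => T (w + t) hstar) =ᶠ[atTop] (fun t : J => T w (T t hstar)) := by
      filter_upwards [gg_ev_pos he] with t ht
      rw [hsg w t hw ht]
      rfl
    exact tendsto_nhds_unique l1 (Tendsto.congr' l3 l2)
  have hplb : GGLB T g p := by
    refine ⟨hp0, gg_tendsto_zero (Eventually.of_forall fun t => norm_nonneg _) fun δ hδ => ?_⟩
    have h2 : Tendsto (fun t : J => ‖T t hstar - p‖) atTop (𝓝 0) :=
      tendsto_iff_norm_sub_tendsto_zero.1 hp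
    obtain ⟨s, hs0, hsd⟩ := ((gg_ev_pos he).and (gg_ev_le h2 (half_pos hδ))).exists
    have hlb2 := gg_lb_shift hsg hpos hM he hsub hstar_lb hs0
    filter_upwards [gg_ev_le hlb2.2 (half_pos hδ)] with t ht
    calc ‖(T t g - p)⁻‖
        ≤ ‖(T t g - T s hstar)⁻‖ + ‖(T t g - p) - (T t g - T s hstar)‖ := gg_norm_negPart_le_add _ _
      _ = ‖(T t g - T s hstar)⁻‖ + ‖T s hstar - p‖ := by rw [sub_sub_sub_cancel_left]
      _ ≤ δ := by linarith
  obtain ⟨h', hh', hh'n⟩ := gg_lb_scaled T hε hLB hstar hstar0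
  have hpnorm : Tendsto (fun t : J => ‖T t hstar‖) atTop (𝓝 ‖p‖) := hp.norm
  have h'le : ‖h'‖ ≤ ‖p‖ := by
    have hev : ∀ᶠ t : J in atTop, ‖h'‖ ≤ ‖T t hstar‖ + ‖(T t hstar - h')⁻‖ := by
      filter_upwards [gg_ev_pos he] with t ht
      exact gg_le_norm_add hAL hh'.1 (hpos t ht _ hstar0)
    have hsum : Tendsto (fun t : J => ‖T t hstar‖ + ‖(T t hstar - h')⁻‖) atTop (𝓝 (‖p‖ + 0)) :=
      hpnorm.add hh'.2
    rw [add_zero] at hsum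
    exact ge_of_tendsto hsum hev
  refine ⟨p, hplb, hpfix, ?_⟩
  calc ε^2 * ‖g‖ = ε * (ε * ‖g‖) := by ring
    _ ≤ ε * s₀ := mul_le_mul_of_nonneg_left hs₀_ge hε.le
    _ = ε * ‖hstar‖ := by rw [hstar_eq]
    _ ≤ ‖h'‖ := hh'n
    _ ≤ ‖p‖ := h'le

lemma gg_step
    (hAL : ∀ f g : E, 0 ≤ f → 0 ≤ g → ‖f + g‖ = ‖f‖ + ‖g‖)
    {T : J → E →L[ℝ] E}
    (hsg : ∀ s t : J, 0 < s → 0 < t → T (s + t) = (T s).comp (T t))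
    (hpos : ∀ t : J, 0 < t → ∀ f : E, 0 ≤ f → 0 ≤ T t f)
    {M : ℝ} (hM : ∀ t : J, 0 < t → ‖T t‖ ≤ M)
    (he : ∃ e : J, 0 < e) (hsub : ∀ s t : J, s < t → ∃ u : J, 0 < u ∧ s + u = t)
    {ε : ℝ} (hε : 0 < ε)
    (hLB : ∀ f : E, 0 ≤ f → ‖f‖ = 1 → ∃ h : E, 0 ≤ h ∧ ε ≤ ‖h‖ ∧
      Tendsto (fun t : J => ‖(T t f - h)⁻‖) atTop (𝓝 0))
    {f : E} (hf : 0 ≤ f) {b : E} (hb : 0 ≤ b) (hfix : ∀ t : J, 0 < t → T t b = b)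
    {d σ N : ℝ} (hσ : 0 < σ)
    (hdef : ∀ᶠ t : J in atTop, ‖(T t f - b)⁻‖ ≤ d)
    (hfreq : ∃ᶠ t : J in atTop, N - σ < ‖T t f‖) :
    ∃ b' : E, 0 ≤ b' ∧ (∀ t : J, 0 < t → T t b' = b') ∧
      (∀ᶠ t : J in atTop, ‖(T t f - b')⁻‖ ≤ M * d + σ) ∧
      ‖b‖ + ε^2 * (N - σ - ‖b‖) ≤ ‖b'‖ := by
  haveI : Nonempty J := ⟨he.choose⟩
  have hM0 : 0 ≤ M := le_trans (norm_nonneg (T he.choose)) (hM _ he.choose_spec)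
  obtain ⟨s, hsN, hs0, hsd⟩ := (hfreq.and_eventually ((gg_ev_pos he).and hdef)).exists
  set x := T s f with hx
  have hx0 : 0 ≤ x := hpos s hs0 f hf
  set u := (x - b)⁺ with hu
  set nn := (x - b)⁻ with hnn
  have hu0 : 0 ≤ u := posPart_nonneg _
  have hnn0 : 0 ≤ nn := negPart_nonneg _
  have hkey : ‖u‖ + ‖b‖ = ‖nn‖ + ‖x‖ := gg_key hAL x b hx0 hb
  have hun : N - σ - ‖b‖ ≤ ‖u‖ := by
    have h0 := norm_nonneg nn
    linarith
  obtain ⟨p, hplb, hpfix, hpn⟩ := gg_fixedlb hAL hsg hpos hM he hsub hε hLB hu0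
  refine ⟨b + p, add_nonneg hb hplb.1, ?_, ?_, ?_⟩
  · intro t ht
    rw [map_add, hfix t ht, hpfix t ht]
  · have hev : ∀ᶠ w : J in atTop, 0 < w ∧ ‖(T w u - p)⁻‖ ≤ σ :=
      (gg_ev_pos he).and (gg_ev_le hplb.2 hσ)
    filter_upwards [gg_ev_shift s hev, gg_decomp hsub he s] with t hall hdec2
    obtain ⟨w, hw0, hsw⟩ := hdec2
    obtain ⟨hw0', hwb⟩ := hall w hsw
    have e1 : T t f = T w x := by
      rw [← hsw, add_comm s w, hsg w s hw0 hs0]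
      rfl
    have e2 : x = b + (u - nn) := by
      rw [hu, hnn, posPart_sub_negPart, add_sub_cancel]
    have e3 : T t f - (b + p) = (T w u - p) - T w nn := by
      rw [e1, e2, map_add, map_sub, hfix w hw0]
      abel
    have e4 : (T t f - (b + p))⁻ ≤ (T w u - p)⁻ + T w nn := by
      rw [e3]
      exact gg_negPart_sub_le _ _ (hpos w hw0 nn hnn0)
    have h6 : ‖T w nn‖ ≤ M * d := by
      calc ‖T w nn‖ ≤ M * ‖nn‖ := le_trans ((T w).le_opNorm nn)
            (mul_le_mul_of_nonneg_right (hM w hw0) (norm_nonneg nn))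
        _ ≤ M * d := mul_le_mul_of_nonneg_left hsd hM0
    calc ‖(T t f - (b + p))⁻‖ ≤ ‖(T w u - p)⁻ + T w nn‖ := gg_norm_mono (negPart_nonneg _) e4
      _ ≤ ‖(T w u - p)⁻‖ + ‖T w nn‖ := norm_add_le _ _
      _ ≤ σ + M * d := add_le_add hwb h6
      _ = M * d + σ := by ring
  · have h7 : ‖b + p‖ = ‖b‖ + ‖p‖ := hAL b p hb hplb.1
    rw [h7]
    have h8 : ε^2 * (N - σ - ‖b‖) ≤ ε^2 * ‖u‖ := mul_le_mul_of_nonneg_left hun (by positivity)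
    linarith

lemma gg_converges
    (hAL : ∀ f g : E, 0 ≤ f → 0 ≤ g → ‖f + g‖ = ‖f‖ + ‖g‖)
    {T : J → E →L[ℝ] E}
    (hsg : ∀ s t : J, 0 < s → 0 < t → T (s + t) = (T s).comp (T t))
    (hpos : ∀ t : J, 0 < t → ∀ f : E, 0 ≤ f → 0 ≤ T t f)
    {M : ℝ} (hM : ∀ t : J, 0 < t → ‖T t‖ ≤ M)
    (he : ∃ e : J, 0 < e) (hsub : ∀ s t : J, s < t → ∃ u : J, 0 < u ∧ s + u = t)
    {ε : ℝ} (hε : 0 < ε)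
    (hLB : ∀ f : E, 0 ≤ f → ‖f‖ = 1 → ∃ h : E, 0 ≤ h ∧ ε ≤ ‖h‖ ∧
      Tendsto (fun t : J => ‖(T t f - h)⁻‖) atTop (𝓝 0))
    {f : E} (hf : 0 ≤ f) :
    ∃ y : E, Tendsto (fun t : J => T t f) atTop (𝓝 y) := by
  haveI : Nonempty J := ⟨he.choose⟩
  have hM0 : 0 ≤ M := le_trans (norm_nonneg (T he.choose)) (hM _ he.choose_spec)
  have hxbdd : ∀ᶠ t : J in atTop, ‖T t f‖ ≤ M * ‖f‖ := by
    filter_upwards [gg_ev_pos he] with t ht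
    exact le_trans ((T t).le_opNorm f) (mul_le_mul_of_nonneg_right (hM t ht) (norm_nonneg f))
  have hbdd : IsBoundedUnder (· ≤ ·) atTop (fun t : J => ‖T t f‖) :=
    ⟨M * ‖f‖, eventually_map.2 hxbdd⟩
  have hbddge : IsBoundedUnder (· ≥ ·) atTop (fun t : J => ‖T t f‖) :=
    ⟨0, eventually_map.2 (Eventually.of_forall fun t => norm_nonneg _)⟩
  have hcob : IsCoboundedUnder (· ≤ ·) atTop (fun t : J => ‖T t f‖) :=
    hbddge.isCoboundedUnder_le
  set N := limsup (fun t : J => ‖T t f‖) atTop with hN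
  have key : ∀ η : ℝ, 0 < η → ∃ b : E, 0 ≤ b ∧
      (∀ᶠ t : J in atTop, ‖(T t f - b)⁻‖ ≤ η) ∧ N - η ≤ ‖b‖ := by
    by_contra hcon
    push_neg at hcon
    obtain ⟨η, hη, hcon⟩ := hcon
    have hb_le : ∀ b : E, 0 ≤ b → ∀ d : ℝ, (∀ᶠ t : J in atTop, ‖(T t f - b)⁻‖ ≤ d) →
        ‖b‖ ≤ N + d := by
      intro b hb d hd
      have hev : ∀ᶠ t : J in atTop, ‖b‖ - d ≤ ‖T t f‖ := by
        filter_upwards [hd, gg_ev_pos he] with t htd ht0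
        have := gg_le_norm_add hAL hb (hpos t ht0 f hf)
        linarith
      have := le_limsup_of_frequently_le hev.frequently hbdd
      rw [← hN] at this
      linarith
    set g0 : ℝ := ε^2 * η / 2 with hg0
    have hg0pos : 0 < g0 := by rw [hg0]; positivity
    set K : ℕ := ⌈(N + η + 1) / g0⌉₊ with hK
    have hKge : N + η + 1 ≤ (K:ℝ) * g0 := by
      have h1 := Nat.le_ceil ((N + η + 1) / g0)
      rw [div_le_iff₀ hg0pos] at h1
      rw [hK]
      exact h1
    set σ : ℝ := min (η/2) (η / (M+1)^K) with hσdef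
    have hσpos : 0 < σ := lt_min (by linarith) (by positivity)
    have hdk_le : ∀ k : ℕ, k ≤ K → σ * (M+1)^k ≤ η := by
      intro k hk
      have h1 : σ ≤ η / (M+1)^K := min_le_right _ _
      have h2 : (M+1)^k ≤ (M+1)^K := pow_le_pow_right₀ (by linarith) hk
      have h3 : (0:ℝ) < (M+1)^K := by positivity
      calc σ * (M+1)^k ≤ (η / (M+1)^K) * (M+1)^K := by
            apply mul_le_mul h1 h2 (by positivity) (by positivity)
        _ = η := div_mul_cancel₀ η h3.ne'
    have main : ∀ k : ℕ, k ≤ K → ∃ b : E, 0 ≤ b ∧ (∀ t : J, 0 < t → T t b = b) ∧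
        (∀ᶠ t : J in atTop, ‖(T t f - b)⁻‖ ≤ σ * (M+1)^k) ∧ (k:ℝ) * g0 ≤ ‖b‖ := by
      intro k
      induction k with
      | zero =>
        intro _
        refine ⟨0, le_refl 0, fun t ht => map_zero (T t), ?_, by simp⟩
        filter_upwards [gg_ev_pos he] with t ht
        have hz : (T t f - 0)⁻ = 0 := by
          rw [sub_zero, negPart_eq_zero]
          exact hpos t ht f hf
        rw [hz, norm_zero]
        positivity
      | succ k ih =>
        intro hk1
        obtain ⟨b, hb0, hbfix, hbdef, hbn⟩ := ih (Nat.le_of_succ_le hk1)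
        have hdk : σ * (M+1)^k ≤ η := hdk_le k (Nat.le_of_succ_le hk1)
        have hblt : ‖b‖ < N - η := hcon b hb0 (hbdef.mono fun t ht => le_trans ht hdk)
        have hfreq : ∃ᶠ t : J in atTop, N - σ < ‖T t f‖ := by
          refine frequently_lt_of_lt_limsup hcob ?_
          rw [← hN]
          linarith
        obtain ⟨b', hb'0, hb'fix, hb'def, hb'n⟩ :=
          gg_step hAL hsg hpos hM he hsub hε hLB hf hb0 hbfix hσpos hbdef hfreq
        refine ⟨b', hb'0, hb'fix, ?_, ?_⟩
        · refine hb'def.mono fun t ht => le_trans ht ?_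
          have h1 : (1:ℝ) ≤ (M+1)^k := one_le_pow₀ (by linarith)
          have h2 : σ ≤ σ * (M+1)^k := by nlinarith
          calc M * (σ*(M+1)^k) + σ ≤ M * (σ*(M+1)^k) + σ * (M+1)^k := by linarith
            _ = σ * (M+1)^(k+1) := by ring
        · have hσ2 : σ ≤ η/2 := min_le_left _ _
          have h2 : η/2 ≤ N - σ - ‖b‖ := by linarith
          have h3 : ε^2 * (η/2) ≤ ε^2 * (N - σ - ‖b‖) :=
            mul_le_mul_of_nonneg_left h2 (by positivity)
          have hg0' : g0 = ε^2 * (η/2) := by rw [hg0]; ring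
          push_cast
          linarith
    obtain ⟨bK, hbK0, _, hbKdef, hbKn⟩ := main K le_rfl
    have h9 : ‖bK‖ ≤ N + η :=
      hb_le bK hbK0 η (hbKdef.mono fun t ht => le_trans ht (hdk_le K le_rfl))
    linarith
  have hN_up : ∀ η : ℝ, 0 < η → ∀ᶠ t : J in atTop, ‖T t f‖ ≤ N + η := by
    intro η hη
    have h1 : limsup (fun t : J => ‖T t f‖) atTop < N + η := by
      rw [← hN]
      linarith
    exact (eventually_lt_of_limsup_lt h1 hbdd).mono fun t ht => ht.le
  have hcauchy : CauchySeq (fun t : J => T t f) := by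
    rw [Metric.cauchySeq_iff]
    intro δ hδ
    have hηpos : 0 < δ/9 := by linarith
    obtain ⟨b, hb0, hbdef, hbn⟩ := key (δ/9) hηpos
    have hev : ∀ᶠ t : J in atTop, ‖T t f - b‖ ≤ 4*(δ/9) := by
      filter_upwards [hbdef, hN_up (δ/9) hηpos, gg_ev_pos he] with t h1 h2 h3
      have hx0 : 0 ≤ T t f := hpos t h3 f hf
      have hkey := gg_key hAL (T t f) b hx0 hb0
      have h4 : ‖(T t f - b)⁺‖ ≤ 3*(δ/9) := by linarith
      calc ‖T t f - b‖ = ‖(T t f - b)⁺ - (T t f - b)⁻‖ := by rw [posPart_sub_negPart]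
        _ ≤ ‖(T t f - b)⁺‖ + ‖(T t f - b)⁻‖ := norm_sub_le _ _
        _ ≤ 4*(δ/9) := by linarith
    obtain ⟨a, ha⟩ := eventually_atTop.1 hev
    refine ⟨a, fun m hm n hn => ?_⟩
    have h5 := ha m hm
    have h6 := ha n hn
    rw [dist_eq_norm]
    have h7 : ‖T m f - T n f‖ ≤ ‖T m f - b‖ + ‖T n f - b‖ := by
      have h8 := norm_sub_le (T m f - b) (T n f - b)
      rw [sub_sub_sub_cancel_right] at h8
      exact h8
    linarith
  exact cauchySeq_tendsto_of_complete hcauchy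

theorem gg_master
    (hAL : ∀ f g : E, 0 ≤ f → 0 ≤ g → ‖f + g‖ = ‖f‖ + ‖g‖)
    {T : J → E →L[ℝ] E}
    (hsg : ∀ s t : J, 0 < s → 0 < t → T (s + t) = (T s).comp (T t))
    (hpos : ∀ t : J, 0 < t → ∀ f : E, 0 ≤ f → 0 ≤ T t f)
    {M : ℝ} (hM : ∀ t : J, 0 < t → ‖T t‖ ≤ M)
    (he : ∃ e : J, 0 < e) (hsub : ∀ s t : J, s < t → ∃ u : J, 0 < u ∧ s + u = t)
    {ε : ℝ} (hε : 0 < ε)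
    (hLB : ∀ f : E, 0 ≤ f → ‖f‖ = 1 → ∃ h : E, 0 ≤ h ∧ ε ≤ ‖h‖ ∧
      Tendsto (fun t : J => ‖(T t f - h)⁻‖) atTop (𝓝 0)) :
    ∃ P : E →L[ℝ] E, (∀ x : E, Tendsto (fun t : J => T t x) atTop (𝓝 (P x))) ∧
      ∀ f : E, 0 ≤ f → ε * ‖f‖ ≤ ‖P f‖ := by
  haveI : Nonempty J := ⟨he.choose⟩
  have hM0 : 0 ≤ M := le_trans (norm_nonneg (T he.choose)) (hM _ he.choose_spec)
  have conv : ∀ x : E, ∃ y : E, Tendsto (fun t : J => T t x) atTop (𝓝 y) := by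
    intro x
    obtain ⟨y₁, hy₁⟩ := gg_converges hAL hsg hpos hM he hsub hε hLB (posPart_nonneg x)
    obtain ⟨y₂, hy₂⟩ := gg_converges hAL hsg hpos hM he hsub hε hLB (negPart_nonneg x)
    refine ⟨y₁ - y₂, ?_⟩
    have hfe : (fun t : J => T t x) = fun t : J => T t x⁺ - T t x⁻ := by
      funext t
      rw [← map_sub, posPart_sub_negPart]
    rw [hfe]
    exact hy₁.sub hy₂
  choose limf hlimf using conv
  have hadd : ∀ x y : E, limf (x + y) = limf x + limf y := by
    intro x y
    refine tendsto_nhds_unique (hlimf (x + y)) ?_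
    exact ((hlimf x).add (hlimf y)).congr fun t => (map_add (T t) x y).symm
  have hsmul : ∀ (c : ℝ) (x : E), limf (c • x) = c • limf x := by
    intro c x
    refine tendsto_nhds_unique (hlimf (c • x)) ?_
    exact ((hlimf x).const_smul c).congr fun t => (map_smul (T t) c x).symm
  have hbound : ∀ x : E, ‖limf x‖ ≤ M * ‖x‖ := by
    intro x
    refine le_of_tendsto (hlimf x).norm ?_
    filter_upwards [gg_ev_pos he] with t ht
    exact le_trans ((T t).le_opNorm x) (mul_le_mul_of_nonneg_right (hM t ht) (norm_nonneg x))
  set Plin : E →ₗ[ℝ] E :=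
    { toFun := limf, map_add' := hadd, map_smul' := hsmul } with hPlin
  refine ⟨Plin.mkContinuous M hbound, ?_, ?_⟩
  · intro x
    rw [LinearMap.mkContinuous_apply]
    exact hlimf x
  · intro f hf
    have hPf : (Plin.mkContinuous M hbound) f = limf f := LinearMap.mkContinuous_apply _ _ _ _
    rw [hPf]
    obtain ⟨h, hlb, hn⟩ := gg_lb_scaled T hε hLB f hf
    have hzero : (limf f - h)⁻ = 0 := by
      have hnorm : ∀ δ : ℝ, 0 < δ → ‖(limf f - h)⁻‖ ≤ δ := by
        intro δ hδ
        have h1 : Tendsto (fun t : J => ‖T t f - limf f‖) atTop (𝓝 0) :=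
          tendsto_iff_norm_sub_tendsto_zero.1 (hlimf f)
        obtain ⟨t, h2, h3⟩ := ((gg_ev_le hlb.2 (half_pos hδ)).and (gg_ev_le h1 (half_pos hδ))).exists
        calc ‖(limf f - h)⁻‖
            ≤ ‖(T t f - h)⁻‖ + ‖(limf f - h) - (T t f - h)‖ := gg_norm_negPart_le_add _ _
          _ = ‖(T t f - h)⁻‖ + ‖limf f - T t f‖ := by rw [sub_sub_sub_cancel_right]
          _ = ‖(T t f - h)⁻‖ + ‖T t f - limf f‖ := by rw [norm_sub_rev]
          _ ≤ δ := by linarith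
      by_contra hne
      have hpos' : 0 < ‖(limf f - h)⁻‖ := by
        rcases (norm_nonneg ((limf f - h)⁻)).lt_or_eq with h' | h'
        · exact h'
        · exact absurd (norm_eq_zero.1 h'.symm) hne
      have := hnorm (‖(limf f - h)⁻‖/2) (by linarith)
      linarith
    have hle : h ≤ limf f := sub_nonneg.1 (negPart_eq_zero.1 hzero)
    calc ε * ‖f‖ ≤ ‖h‖ := hn
      _ ≤ ‖limf f‖ := gg_norm_mono hlb.1 hle

end Semigroup

section Final
variable {E : Type*} [NormedAddCommGroup E] [Lattice E] [HasSolidNorm E] [IsOrderedAddMonoid E] [NormedSpace ℝ E] [CompleteSpace E]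

lemma gg_easy {J : Type*} [Nonempty J] [SemilatticeSup J] (ε : ℝ)
    (T : J → E →L[ℝ] E) (P : E →L[ℝ] E)
    (hTP : ∀ f : E, Tendsto (fun t : J => T t f) atTop (𝓝 (P f)))
    (hPn : ∀ f : E, 0 ≤ f → ε * ‖f‖ ≤ ‖P f‖)
    (hposev : ∀ f : E, 0 ≤ f → ∀ᶠ t : J in atTop, 0 ≤ T t f) :
    ∀ f : E, 0 ≤ f → ‖f‖ = 1 → ∃ h : E, 0 ≤ h ∧ ε ≤ ‖h‖ ∧
      Tendsto (fun t : J => ‖(T t f - h)⁻‖) atTop (𝓝 0) := by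
  intro f hf hf1
  refine ⟨P f, ge_of_tendsto (hTP f) (hposev f hf), ?_, ?_⟩
  · have h2 := hPn f hf
    rw [hf1, mul_one] at h2
    exact h2
  · have h1 : Tendsto (fun t : J => ‖T t f - P f‖) atTop (𝓝 0) :=
      tendsto_iff_norm_sub_tendsto_zero.1 (hTP f)
    exact squeeze_zero (fun t => norm_nonneg _) (fun t => gg_norm_negPart_le _) h1

lemma gg_pow_pos (S : E →L[ℝ] E) (hS : ∀ f : E, 0 ≤ f → 0 ≤ S f) :
    ∀ (n : ℕ) (f : E), 0 ≤ f → 0 ≤ (S ^ n) f := by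
  intro n
  induction n with
  | zero => intro f hf; simpa using hf
  | succ n ih =>
      intro f hf
      have h1 : S ^ (n+1) = S.comp (S ^ n) := by
        rw [pow_succ']
        rfl
      rw [h1]
      exact hS _ (ih f hf)

end Final

/-- For a bounded positive semigroup on an AL-space and `ε > 0`: the semigroup converges
strongly to an operator `P` with `‖Pf‖ ≥ ε ‖f‖` for all positive `f` if and only if every
normalised positive vector `f` admits an individual lower bound `h_f` with `‖h_f‖ ≥ ε`.
Both the time-discrete case `J = ℕ` and the case `J = (0,∞)` are covered. -/
theorem bounded_semigroup_convergence_iff_individual_lower_bounds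
    {E : Type*} [NormedAddCommGroup E] [Lattice E] [HasSolidNorm E] [IsOrderedAddMonoid E]
    [NormedSpace ℝ E] [CompleteSpace E]
    (hAL : ∀ f g : E, 0 ≤ f → 0 ≤ g → ‖f + g‖ = ‖f‖ + ‖g‖)
    (ε : ℝ) (hε : 0 < ε) :
    -- the time-discrete case `J = ℕ`
    (∀ S : E →L[ℝ] E,
      (∀ f : E, 0 ≤ f → 0 ≤ S f) → (∃ M : ℝ, ∀ n : ℕ, ‖S ^ n‖ ≤ M) →
      ((∃ P : E →L[ℝ] E,
          (∀ f : E, Tendsto (fun n : ℕ => (S ^ n) f) atTop (𝓝 (P f))) ∧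
          (∀ f : E, 0 ≤ f → ε * ‖f‖ ≤ ‖P f‖)) ↔
        (∀ f : E, 0 ≤ f → ‖f‖ = 1 →
          ∃ h : E, 0 ≤ h ∧ ε ≤ ‖h‖ ∧
            Tendsto (fun n : ℕ => ‖((S ^ n) f - h)⁻‖) atTop (𝓝 0)))) ∧
    -- the case `J = (0, ∞)`
    (∀ T : ℝ → E →L[ℝ] E,
      (∀ s t : ℝ, 0 < s → 0 < t → T (s + t) = (T s).comp (T t)) →
      (∀ t : ℝ, 0 < t → ∀ f : E, 0 ≤ f → 0 ≤ T t f) →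
      (∃ M : ℝ, ∀ t : ℝ, 0 < t → ‖T t‖ ≤ M) →
      ((∃ P : E →L[ℝ] E,
          (∀ f : E, Tendsto (fun t : ℝ => T t f) atTop (𝓝 (P f))) ∧
          (∀ f : E, 0 ≤ f → ε * ‖f‖ ≤ ‖P f‖)) ↔
        (∀ f : E, 0 ≤ f → ‖f‖ = 1 →
          ∃ h : E, 0 ≤ h ∧ ε ≤ ‖h‖ ∧
            Tendsto (fun t : ℝ => ‖(T t f - h)⁻‖) atTop (𝓝 0)))) := by
  constructor
  · intro S hS hbdd
    constructor
    · rintro ⟨P, hP1, hP2⟩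
      exact gg_easy ε (fun n : ℕ => S ^ n) P hP1 hP2
        (fun f hf => Eventually.of_forall fun n => gg_pow_pos S hS n f hf)
    · intro hLB'
      obtain ⟨M, hM⟩ := hbdd
      obtain ⟨P, hP1, hP2⟩ := gg_master (J := ℕ) hAL (T := fun n : ℕ => S ^ n)
        (fun s t _ _ => by show S ^ (s+t) = (S^s).comp (S^t); rw [pow_add]; rfl)
        (fun t _ f hf => gg_pow_pos S hS t f hf)
        (M := M) (fun t _ => hM t)
        ⟨1, one_pos⟩ (fun s t hst => ⟨t - s, by omega, by omega⟩)
        hε hLB'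
      exact ⟨P, hP1, hP2⟩
  · intro T hsg hpos hbdd
    constructor
    · rintro ⟨P, hP1, hP2⟩
      refine gg_easy ε T P hP1 hP2 ?_
      intro f hf
      filter_upwards [eventually_gt_atTop (0:ℝ)] with t ht
      exact hpos t ht f hf
    · intro hLB'
      obtain ⟨M, hM⟩ := hbdd
      exact gg_master hAL hsg hpos (fun t ht => hM t ht) ⟨1, one_pos⟩
        (fun s t hst => ⟨t - s, by linarith, by ring⟩) hε hLB'
end

section
/- Let E be an AL-space and let (S_t)_{t∈J}, (T_t)_{t∈J} be bounded positive semigroups (J = ℕ or (0,∞)) such that ‖(S_t f − T_t f)⁻‖ → 0 as t → ∞ for all f ∈ E₊. If (T_t) converges strongly to an operator P with ‖Pf‖ ≥ ε‖f‖ for all f ∈ E₊ and some ε > 0, then (S_t) converges strongly as well. -/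
open Filter Topology

set_option linter.unusedSectionVars false
set_option maxHeartbeats 1000000

section Aux
variable {E : Type*} [NormedAddCommGroup E] [Lattice E] [HasSolidNorm E] [IsOrderedAddMonoid E] [NormedSpace ℝ E] [CompleteSpace E]

lemma my_norm_posPart_le (x : E) : ‖x⁺‖ ≤ ‖x‖ := by
  apply norm_le_norm_of_abs_le_abs
  rw [abs_of_nonneg (posPart_nonneg x)]
  exact sup_le (le_abs_self x) (abs_nonneg x)

lemma my_norm_mono {a b : E} (ha : 0 ≤ a) (hab : a ≤ b) : ‖a‖ ≤ ‖b‖ := by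
  apply norm_le_norm_of_abs_le_abs
  rw [abs_of_nonneg ha, abs_of_nonneg (le_trans ha hab)]
  exact hab

lemma my_neg_negPart_le (x : E) : -x⁻ ≤ x := by
  rw [← sub_nonneg, sub_neg_eq_add]
  nth_rewrite 1 [← posPart_sub_negPart x]
  rw [sub_add_cancel]
  exact posPart_nonneg x

lemma key (hAL : ∀ f g : E, 0 ≤ f → 0 ≤ g → ‖f + g‖ = ‖f‖ + ‖g‖)
    {J : Type*} (l : Filter J) [hNB : l.NeBot]
    (add : J → J → J)
    (Hl : ∀ t, Tendsto (fun s => add s t) l l)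
    (Hl2 : ∀ t, Tendsto (fun s => add t s) l l)
    (Hsur : ∀ t, ∀ A ∈ l, {u | ∃ s ∈ A, u = add s t} ∈ l)
    (S T : J → E →L[ℝ] E)
    (hSsem : ∀ s t, S (add s t) = (S s).comp (S t))
    (hTsem : ∀ s t, T (add s t) = (T s).comp (T t))
    (hSpos : ∀ t (f : E), 0 ≤ f → 0 ≤ S t f)
    (hTpos : ∀ t (f : E), 0 ≤ f → 0 ≤ T t f)
    {M : ℝ} (hM1 : 1 ≤ M) (hSM : ∀ t, ‖S t‖ ≤ M) (hTM : ∀ t, ‖T t‖ ≤ M)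
    (hdom : ∀ f : E, 0 ≤ f → Tendsto (fun t => ‖(S t f - T t f)⁻‖) l (𝓝 0))
    {P : E →L[ℝ] E} {ε : ℝ} (hε : 0 < ε) (hε1 : ε ≤ 1)
    (hP : ∀ f, Tendsto (fun t => T t f) l (𝓝 (P f)))
    (hPε : ∀ f : E, 0 ≤ f → ε * ‖f‖ ≤ ‖P f‖) :
    ∃ Q : E →L[ℝ] E, ∀ f, Tendsto (fun t => S t f) l (𝓝 (Q f)) := by
  classical
  have hMpos : (0:ℝ) < M := lt_of_lt_of_le one_pos hM1
  have hSnorm : ∀ t (x : E), ‖S t x‖ ≤ M * ‖x‖ := fun t x =>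
    ((S t).le_opNorm x).trans (mul_le_mul_of_nonneg_right (hSM t) (norm_nonneg x))
  have hTnorm : ∀ t (x : E), ‖T t x‖ ≤ M * ‖x‖ := fun t x =>
    ((T t).le_opNorm x).trans (mul_le_mul_of_nonneg_right (hTM t) (norm_nonneg x))
  set pp : E → J → E := fun g t => (S t g - T t g)⁺ with hppdef
  set nn : E → J → E := fun g t => (S t g - T t g)⁻ with hnndef
  have hpp0 : ∀ (g : E) t, 0 ≤ pp g t := fun g t => posPart_nonneg _
  have hnn0 : ∀ (g : E) t, 0 ≤ nn g t := fun g t => negPart_nonneg _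
  have hppeq : ∀ (g : E) u, pp g u = S u g - T u g + nn g u := fun g u =>
    eq_add_of_sub_eq (posPart_sub_negPart _)
  have hdec : ∀ (g : E) t, S t g = T t g + pp g t - nn g t := by
    intro g t; rw [hppeq]; abel
  have hppB : ∀ (g : E) t, ‖pp g t‖ ≤ 2 * M * ‖g‖ := by
    intro g t
    calc ‖pp g t‖ ≤ ‖S t g - T t g‖ := my_norm_posPart_le _
    _ ≤ ‖S t g‖ + ‖T t g‖ := norm_sub_le _ _
    _ ≤ M * ‖g‖ + M * ‖g‖ := add_le_add (hSnorm t g) (hTnorm t g)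
    _ = 2 * M * ‖g‖ := by ring
  have hTnormlim : ∀ g : E, Tendsto (fun t => ‖T t g - P g‖) l (𝓝 0) := fun g =>
    tendsto_iff_norm_sub_tendsto_zero.mp (hP g)
  have hPpos : ∀ g : E, 0 ≤ g → 0 ≤ P g := fun g hg =>
    ge_of_tendsto' (hP g) (fun t => hTpos t g hg)
  have hTP : ∀ s (g : E), T s (P g) = P g := by
    intro s g
    have h1 : Tendsto (fun u => T (add s u) g) l (𝓝 (T s (P g))) := by
      simp only [hTsem, ContinuousLinearMap.comp_apply]
      exact ((T s).continuous.tendsto _).comp (hP g)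
    have h2 : Tendsto (fun u => T (add s u) g) l (𝓝 (P g)) := (hP g).comp (Hl2 s)
    exact tendsto_nhds_unique h1 h2
  have hPP : ∀ g : E, P (P g) = P g := by
    intro g
    refine tendsto_nhds_unique (hP (P g)) ?_
    simp only [hTP]; exact tendsto_const_nhds
  -- order facts
  have hTleS : ∀ (g : E) s, T s g ≤ S s g + nn g s := by
    intro g s
    have h := my_neg_negPart_le (S s g - T s g)
    have h0 : 0 ≤ (S s g - T s g) + nn g s := by
      have := add_le_add h (le_refl (nn g s))
      rw [neg_add_cancel] at this; exact this
    have heq : S s g + nn g s - T s g = (S s g - T s g) + nn g s := by abel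
    rw [← sub_nonneg, heq]; exact h0
  have hTnn : ∀ (g : E), 0 ≤ g → ∀ s, ‖T s g‖ ≤ ‖S s g‖ + ‖nn g s‖ := by
    intro g hg s
    calc ‖T s g‖ ≤ ‖S s g + nn g s‖ := my_norm_mono (hTpos s g hg) (hTleS g s)
    _ ≤ ‖S s g‖ + ‖nn g s‖ := norm_add_le _ _
  -- master identity
  have hB : ∀ (g : E) s t, S (add s t) g
      = P g + pp (P g) s + S s (pp g t)
        + (S s (T t g - P g) - S s (nn g t) - nn (P g) s) := by
    intro g s t
    have e1 : S (add s t) g = S s (S t g) := by rw [hSsem]; rfl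
    rw [e1, hdec g t, map_sub, map_add]
    have e2 : S s (T t g) = S s (P g) + S s (T t g - P g) := by
      rw [← map_add]; congr 1; abel
    rw [e2, hdec (P g) s, hTP s g]
    abel
  have hVec : ∀ (g : E) s t, pp g (add s t)
      = pp (P g) s + S s (pp g t)
        + (S s (T t g - P g) - S s (nn g t) - nn (P g) s + nn g (add s t)
            + (P g - T (add s t) g)) := by
    intro g s t
    rw [hppeq g (add s t), hB g s t]
    abel
  have hYB : ∀ (g : E) s t,
      ‖S s (T t g - P g) - S s (nn g t) - nn (P g) s + nn g (add s t) + (P g - T (add s t) g)‖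
      ≤ M * ‖T t g - P g‖ + M * ‖nn g t‖ + ‖nn (P g) s‖ + ‖nn g (add s t)‖
          + ‖T (add s t) g - P g‖ := by
    intro g s t
    have h1 : ‖P g - T (add s t) g‖ = ‖T (add s t) g - P g‖ := norm_sub_rev _ _
    calc ‖S s (T t g - P g) - S s (nn g t) - nn (P g) s + nn g (add s t) + (P g - T (add s t) g)‖
        ≤ ‖S s (T t g - P g) - S s (nn g t) - nn (P g) s + nn g (add s t)‖
            + ‖P g - T (add s t) g‖ := norm_add_le _ _
    _ ≤ ‖S s (T t g - P g) - S s (nn g t) - nn (P g) s‖ + ‖nn g (add s t)‖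
            + ‖P g - T (add s t) g‖ := by gcongr; exact norm_add_le _ _
    _ ≤ ‖S s (T t g - P g) - S s (nn g t)‖ + ‖nn (P g) s‖ + ‖nn g (add s t)‖
            + ‖P g - T (add s t) g‖ := by gcongr; exact norm_sub_le _ _
    _ ≤ ‖S s (T t g - P g)‖ + ‖S s (nn g t)‖ + ‖nn (P g) s‖ + ‖nn g (add s t)‖
            + ‖P g - T (add s t) g‖ := by gcongr; exact norm_sub_le _ _
    _ ≤ M * ‖T t g - P g‖ + M * ‖nn g t‖ + ‖nn (P g) s‖ + ‖nn g (add s t)‖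
            + ‖T (add s t) g - P g‖ := by
          rw [h1]; gcongr <;> [exact hSnorm _ _; exact hSnorm _ _]
  -- limsup infrastructure
  set UU : E → Set ℝ := fun g => {c | ∀ᶠ t in l, ‖pp g t‖ ≤ c} with hUUdef
  have hUUne : ∀ g : E, (2 * M * ‖g‖) ∈ UU g := fun g => Eventually.of_forall (hppB g)
  have hUUpos : ∀ (g : E) c, c ∈ UU g → 0 ≤ c := by
    intro g c hc
    obtain ⟨t, h1⟩ := hc.exists
    exact le_trans (norm_nonneg _) h1
  have hUUbdd : ∀ g : E, BddBelow (UU g) := fun g => ⟨0, fun c hc => hUUpos g c hc⟩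
  set Lam : E → ℝ := fun g => sInf (UU g) with hLamdef
  have hLam_le : ∀ (g : E) c, (∀ᶠ t in l, ‖pp g t‖ ≤ c) → Lam g ≤ c := fun g c hc =>
    csInf_le (hUUbdd g) hc
  have hLam_nonneg : ∀ g : E, 0 ≤ Lam g := fun g =>
    le_csInf ⟨_, hUUne g⟩ (fun c hc => hUUpos g c hc)
  have hLam_ev : ∀ (g : E) σ, 0 < σ → ∀ᶠ t in l, ‖pp g t‖ ≤ Lam g + σ := by
    intro g σ hσ
    have : Lam g < Lam g + σ := lt_add_of_pos_right _ hσ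
    obtain ⟨c, hc, hlt⟩ := (csInf_lt_iff (hUUbdd g) ⟨_, hUUne g⟩).mp this
    exact hc.mono fun t ht => le_trans ht (le_of_lt hlt)
  have hLam_freq : ∀ (g : E) σ, 0 < σ → ∃ᶠ t in l, Lam g - σ ≤ ‖pp g t‖ := by
    intro g σ hσ
    by_contra hcon
    rw [not_frequently] at hcon
    have : Lam g ≤ Lam g - σ :=
      hLam_le g _ (hcon.mono fun t ht => le_of_lt (lt_of_not_ge ht))
    linarith
  -- eventual smallness helpers
  have hEvN : ∀ (g : E), 0 ≤ g → ∀ σ, 0 < σ → ∀ᶠ s in l, ‖nn g s‖ < σ := fun g hg σ hσ =>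
    (hdom g hg).eventually (gt_mem_nhds hσ)
  have hEvT : ∀ (g : E) σ, 0 < σ → ∀ᶠ s in l, ‖T s g - P g‖ < σ := fun g σ hσ =>
    (hTnormlim g).eventually (gt_mem_nhds hσ)
  -- Step C : the positive parts over P g tend to zero
  have hC0 : ∀ g : E, 0 ≤ g → ∀ t, ε * ‖pp (P g) t‖ ≤ M * ‖nn (P g) t‖ := by
    intro g hg t
    have hh0 : 0 ≤ P g := hPpos g hg
    have hPh : P (P g) = P g := hPP g
    have hThh : ∀ u, T u (P g) = P g := fun u => hTP u g
    have hq0 : 0 ≤ pp (P g) t := hpp0 _ t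
    have hmain : ∀ σ, 0 < σ → ε * ‖pp (P g) t‖ ≤ M * ‖nn (P g) t‖ + 6 * σ := by
      intro σ hσ
      have hev : ∀ᶠ s in l, ‖pp (P g) (add s t)‖ ≤ Lam (P g) + σ ∧
          ‖T s (pp (P g) t) - P (pp (P g) t)‖ < σ ∧
          ‖nn (pp (P g) t) s‖ < σ ∧ ‖nn (P g) s‖ < σ ∧ ‖nn (P g) (add s t)‖ < σ := by
        filter_upwards [(Hl t).eventually (hLam_ev (P g) σ hσ),
          hEvT (pp (P g) t) σ hσ, hEvN (pp (P g) t) hq0 σ hσ, hEvN (P g) hh0 σ hσ,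
          (Hl t).eventually (hEvN (P g) hh0 σ hσ)] with s h1 h2 h3 h4 h5
        exact ⟨h1, h2, h3, h4, h5⟩
      obtain ⟨s, hfr, h1, h2, h3, h4, h5⟩ :=
        ((hLam_freq (P g) σ hσ).and_eventually hev).exists
      have hid := hVec (P g) s t
      rw [hPh] at hid
      have hXnorm : ‖pp (P g) s + S s (pp (P g) t)‖ = ‖pp (P g) s‖ + ‖S s (pp (P g) t)‖ :=
        hAL _ _ (hpp0 _ s) (hSpos s _ hq0)
      have hYle : ‖S s (T t (P g) - P g) - S s (nn (P g) t) - nn (P g) s + nn (P g) (add s t) + (P g - T (add s t) (P g))‖ ≤ M * ‖nn (P g) t‖ + 2 * σ := by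
        have h6 := hYB (P g) s t
        rw [hPh] at h6
        have hz : ‖T t (P g) - P g‖ = 0 := by rw [hThh, sub_self, norm_zero]
        have hz2 : ‖T (add s t) (P g) - P g‖ = 0 := by rw [hThh, sub_self, norm_zero]
        rw [hz, hz2] at h6
        linarith
      have hXle : ‖pp (P g) s + S s (pp (P g) t)‖
          ≤ ‖pp (P g) (add s t)‖ + (M * ‖nn (P g) t‖ + 2 * σ) := by
        have e : pp (P g) s + S s (pp (P g) t) = pp (P g) (add s t) - (S s (T t (P g) - P g) - S s (nn (P g) t) - nn (P g) s + nn (P g) (add s t) + (P g - T (add s t) (P g))) := by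
          rw [hid]; abel
        rw [e]
        exact le_trans (norm_sub_le _ _) (by linarith)
      have hT1 : ‖T s (pp (P g) t)‖ ≤ ‖S s (pp (P g) t)‖ + ‖nn (pp (P g) t) s‖ :=
        hTnn _ hq0 s
      have hT2 : ‖P (pp (P g) t)‖ - σ ≤ ‖T s (pp (P g) t)‖ := by
        have h := norm_sub_norm_le (P (pp (P g) t)) (T s (pp (P g) t))
        rw [norm_sub_rev] at h
        linarith
      have hεq : ε * ‖pp (P g) t‖ ≤ ‖P (pp (P g) t)‖ := hPε _ hq0
      linarith
    apply le_of_forall_pos_le_add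
    intro δ hδ
    have := hmain (δ / 6) (by positivity)
    linarith
  have hC : ∀ g : E, 0 ≤ g → Tendsto (fun s => ‖pp (P g) s‖) l (𝓝 0) := by
    intro g hg
    have hb : ∀ s, ‖pp (P g) s‖ ≤ (M / ε) * ‖nn (P g) s‖ := by
      intro s
      have h := hC0 g hg s
      rw [div_mul_eq_mul_div, le_div_iff₀ hε, mul_comm]
      exact h
    have : Tendsto (fun s => (M / ε) * ‖nn (P g) s‖) l (𝓝 0) := by
      have := (hdom (P g) (hPpos g hg)).const_mul (M / ε)
      simpa using this
    exact squeeze_zero (fun s => norm_nonneg _) hb this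
  -- Step (i): lower bound on Lam
  have hI : ∀ g : E, 0 ≤ g → ∀ t,
      ε * ‖pp g t‖ ≤ Lam g + M * ‖T t g - P g‖ + M * ‖nn g t‖ := by
    intro g hg t
    have hq0 : 0 ≤ pp g t := hpp0 g t
    have hmain : ∀ σ, 0 < σ →
        ε * ‖pp g t‖ ≤ Lam g + M * ‖T t g - P g‖ + M * ‖nn g t‖ + 6 * σ := by
      intro σ hσ
      have hev : ∀ᶠ s in l, ‖pp g (add s t)‖ ≤ Lam g + σ ∧
          ‖T s (pp g t) - P (pp g t)‖ < σ ∧ ‖nn (pp g t) s‖ < σ ∧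
          ‖nn (P g) s‖ < σ ∧ ‖nn g (add s t)‖ < σ ∧ ‖T (add s t) g - P g‖ < σ := by
        filter_upwards [(Hl t).eventually (hLam_ev g σ hσ),
          hEvT (pp g t) σ hσ, hEvN (pp g t) hq0 σ hσ, hEvN (P g) (hPpos g hg) σ hσ,
          (Hl t).eventually (hEvN g hg σ hσ),
          (Hl t).eventually (hEvT g σ hσ)] with s h1 h2 h3 h4 h5 h6
        exact ⟨h1, h2, h3, h4, h5, h6⟩
      obtain ⟨s, h1, h2, h3, h4, h5, h6⟩ := hev.exists
      have hid := hVec g s t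
      have hXnorm : ‖pp (P g) s + S s (pp g t)‖ = ‖pp (P g) s‖ + ‖S s (pp g t)‖ :=
        hAL _ _ (hpp0 _ s) (hSpos s _ hq0)
      have hYle : ‖S s (T t g - P g) - S s (nn g t) - nn (P g) s + nn g (add s t) + (P g - T (add s t) g)‖ ≤ M * ‖T t g - P g‖ + M * ‖nn g t‖ + 3 * σ := by
        have h7 := hYB g s t
        linarith
      have hXle : ‖pp (P g) s + S s (pp g t)‖
          ≤ ‖pp g (add s t)‖ + (M * ‖T t g - P g‖ + M * ‖nn g t‖ + 3 * σ) := by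
        have e : pp (P g) s + S s (pp g t) = pp g (add s t) - (S s (T t g - P g) - S s (nn g t) - nn (P g) s + nn g (add s t) + (P g - T (add s t) g)) := by
          rw [hid]; abel
        rw [e]
        exact le_trans (norm_sub_le _ _) (by linarith)
      have hT1 : ‖T s (pp g t)‖ ≤ ‖S s (pp g t)‖ + ‖nn (pp g t) s‖ := hTnn _ hq0 s
      have hT2 : ‖P (pp g t)‖ - σ ≤ ‖T s (pp g t)‖ := by
        have h := norm_sub_norm_le (P (pp g t)) (T s (pp g t))
        rw [norm_sub_rev] at h
        linarith
      have hεq : ε * ‖pp g t‖ ≤ ‖P (pp g t)‖ := hPε _ hq0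
      have hppn : 0 ≤ ‖pp (P g) s‖ := norm_nonneg _
      linarith
    apply le_of_forall_pos_le_add
    intro δ hδ
    have := hmain (δ / 6) (by positivity)
    linarith
  -- Step (ii): Lam decreases along positive parts
  have hII : ∀ g : E, 0 ≤ g → ∀ t,
      Lam (pp g t) ≤ Lam g + M * ‖T t g - P g‖ + M * ‖nn g t‖ - ε * ‖pp g t‖ := by
    intro g hg t
    have hq0 : 0 ≤ pp g t := hpp0 g t
    apply le_of_forall_pos_le_add
    intro δ hδ
    have hσ : 0 < δ / 8 := by positivity
    apply hLam_le
    have hCev : ∀ᶠ s in l, ‖pp (P g) s‖ < δ / 8 :=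
      (hC g hg).eventually (gt_mem_nhds hσ)
    filter_upwards [(Hl t).eventually (hLam_ev g (δ/8) hσ),
      hEvT (pp g t) (δ/8) hσ, hEvN (pp g t) hq0 (δ/8) hσ, hEvN (P g) (hPpos g hg) (δ/8) hσ,
      (Hl t).eventually (hEvN g hg (δ/8) hσ),
      (Hl t).eventually (hEvT g (δ/8) hσ), hCev] with s h1 h2 h3 h4 h5 h6 h7
    -- pointwise bound for ‖pp (pp g t) s‖
    have hswap : T s (pp g t) + pp (pp g t) s = S s (pp g t) + nn (pp g t) s := by
      rw [hdec (pp g t) s]; abel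
    have hswn : ‖T s (pp g t)‖ + ‖pp (pp g t) s‖ ≤ ‖S s (pp g t)‖ + ‖nn (pp g t) s‖ := by
      calc ‖T s (pp g t)‖ + ‖pp (pp g t) s‖ = ‖T s (pp g t) + pp (pp g t) s‖ :=
            (hAL _ _ (hTpos s _ hq0) (hpp0 _ s)).symm
      _ = ‖S s (pp g t) + nn (pp g t) s‖ := by rw [hswap]
      _ ≤ ‖S s (pp g t)‖ + ‖nn (pp g t) s‖ := norm_add_le _ _
    have hid := hVec g s t
    have hSle : ‖S s (pp g t)‖ ≤ ‖pp g (add s t)‖ + ‖pp (P g) s‖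
        + (M * ‖T t g - P g‖ + M * ‖nn g t‖ + 3 * (δ/8)) := by
      have hYle : ‖S s (T t g - P g) - S s (nn g t) - nn (P g) s + nn g (add s t) + (P g - T (add s t) g)‖ ≤ M * ‖T t g - P g‖ + M * ‖nn g t‖ + 3 * (δ/8) := by
        have h8 := hYB g s t
        linarith
      have e : S s (pp g t) = pp g (add s t) - pp (P g) s - (S s (T t g - P g) - S s (nn g t) - nn (P g) s + nn g (add s t) + (P g - T (add s t) g)) := by
        rw [hid]; abel
      rw [e]
      calc ‖pp g (add s t) - pp (P g) s - (S s (T t g - P g) - S s (nn g t) - nn (P g) s + nn g (add s t) + (P g - T (add s t) g))‖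
          ≤ ‖pp g (add s t) - pp (P g) s‖ + ‖S s (T t g - P g) - S s (nn g t) - nn (P g) s + nn g (add s t) + (P g - T (add s t) g)‖ := norm_sub_le _ _
      _ ≤ ‖pp g (add s t)‖ + ‖pp (P g) s‖ + ‖S s (T t g - P g) - S s (nn g t) - nn (P g) s + nn g (add s t) + (P g - T (add s t) g)‖ := by
            have := norm_sub_le (pp g (add s t)) (pp (P g) s); linarith
      _ ≤ _ := by linarith
    have hT2 : ‖P (pp g t)‖ - δ/8 ≤ ‖T s (pp g t)‖ := by
      have h := norm_sub_norm_le (P (pp g t)) (T s (pp g t))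
      rw [norm_sub_rev] at h
      linarith
    have hεq : ε * ‖pp g t‖ ≤ ‖P (pp g t)‖ := hPε _ hq0
    linarith
  -- the Cauchy property
  set Good : E → ℝ → Prop :=
    fun g γ => ∀ᶠ z : J × J in l ×ˢ l, ‖S z.1 g - S z.2 g‖ ≤ γ with hGooddef
  have hGoodMono : ∀ (g : E) γ γ', γ ≤ γ' → Good g γ → Good g γ' := by
    intro g γ γ' h hG
    exact hG.mono (fun z hz => le_trans hz h)
  -- base case
  have hBase : ∀ g : E, 0 ≤ g → ∀ σ, 0 < σ → Good g (2 * Lam g + σ) := by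
    intro g hg σ hσ
    have hσ8 : 0 < σ / 8 := by positivity
    have hev : ∀ᶠ u in l, ‖pp g u‖ ≤ Lam g + σ/8 ∧ ‖T u g - P g‖ < σ/8 ∧ ‖nn g u‖ < σ/8 := by
      filter_upwards [hLam_ev g (σ/8) hσ8, hEvT g (σ/8) hσ8, hEvN g hg (σ/8) hσ8] with
        u h1 h2 h3
      exact ⟨h1, h2, h3⟩
    filter_upwards [hev.prod_inl l, hev.prod_inr l] with z hz1 hz2
    obtain ⟨ha1, ha2, ha3⟩ := hz1
    obtain ⟨hb1, hb2, hb3⟩ := hz2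
    have hid : S z.1 g - S z.2 g
        = ((T z.1 g - P g) - (T z.2 g - P g)) + (pp g z.1 - pp g z.2)
            + (nn g z.2 - nn g z.1) := by
      rw [hdec g z.1, hdec g z.2]; abel
    rw [hid]
    have n1 := norm_add_le (((T z.1 g - P g) - (T z.2 g - P g)) + (pp g z.1 - pp g z.2))
        (nn g z.2 - nn g z.1)
    have n2 := norm_add_le ((T z.1 g - P g) - (T z.2 g - P g)) (pp g z.1 - pp g z.2)
    have n3 := norm_sub_le (T z.1 g - P g) (T z.2 g - P g)
    have n4 := norm_sub_le (pp g z.1) (pp g z.2)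
    have n5 := norm_sub_le (nn g z.2) (nn g z.1)
    linarith
  -- the shift claim
  have hShift : ∀ (g : E) t γ σ, 0 ≤ g → 0 < σ → Good (pp g t) γ →
      Good g (γ + 2 * M * ‖T t g - P g‖ + 2 * M * ‖nn g t‖ + σ) := by
    intro g t γ σ hg hσ hGq
    have hσ4 : 0 < σ / 4 := by positivity
    have hid : ∀ s s' : J, S (add s t) g - S (add s' t) g
        = (S s (pp g t) - S s' (pp g t)) + (pp (P g) s - pp (P g) s')
          + ((S s (T t g - P g) - S s (nn g t) - nn (P g) s)
              - (S s' (T t g - P g) - S s' (nn g t) - nn (P g) s')) := by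
      intro s s'
      rw [hB g s t, hB g s' t]; abel
    have hWb : ∀ s : J, ‖S s (T t g - P g) - S s (nn g t) - nn (P g) s‖
        ≤ M * ‖T t g - P g‖ + M * ‖nn g t‖ + ‖nn (P g) s‖ := by
      intro s
      calc ‖S s (T t g - P g) - S s (nn g t) - nn (P g) s‖
          ≤ ‖S s (T t g - P g) - S s (nn g t)‖ + ‖nn (P g) s‖ := norm_sub_le _ _
      _ ≤ ‖S s (T t g - P g)‖ + ‖S s (nn g t)‖ + ‖nn (P g) s‖ := by
            have := norm_sub_le (S s (T t g - P g)) (S s (nn g t)); linarith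
      _ ≤ M * ‖T t g - P g‖ + M * ‖nn g t‖ + ‖nn (P g) s‖ := by
            have := hSnorm s (T t g - P g); have := hSnorm s (nn g t); linarith
    -- a good set of parameters
    obtain ⟨U, hU, V, hV, hUV⟩ := Filter.mem_prod_iff.mp hGq
    have hsmall : ∀ᶠ s in l, ‖pp (P g) s‖ < σ/4 ∧ ‖nn (P g) s‖ < σ/4 := by
      filter_upwards [(hC g hg).eventually (gt_mem_nhds hσ4),
        hEvN (P g) (hPpos g hg) (σ/4) hσ4] with s h1 h2
      exact ⟨h1, h2⟩
    have hW0 : (U ∩ V ∩ {s | ‖pp (P g) s‖ < σ/4 ∧ ‖nn (P g) s‖ < σ/4}) ∈ l :=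
      inter_mem (inter_mem hU hV) hsmall
    have hBmem := Hsur t _ hW0
    refine mem_of_superset (prod_mem_prod hBmem hBmem) ?_
    rintro ⟨u, u'⟩ ⟨⟨s, hs, rfl⟩, ⟨s', hs', rfl⟩⟩
    obtain ⟨⟨hsU, hsV⟩, hs1, hs2⟩ := hs
    obtain ⟨⟨hs'U, hs'V⟩, hs'1, hs'2⟩ := hs'
    have hq : ‖S s (pp g t) - S s' (pp g t)‖ ≤ γ := hUV (Set.mk_mem_prod hsU hs'V)
    simp only [Set.mem_setOf_eq]
    rw [hid s s']
    have n1 := norm_add_le ((S s (pp g t) - S s' (pp g t)) + (pp (P g) s - pp (P g) s'))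
        ((S s (T t g - P g) - S s (nn g t) - nn (P g) s)
          - (S s' (T t g - P g) - S s' (nn g t) - nn (P g) s'))
    have n2 := norm_add_le (S s (pp g t) - S s' (pp g t)) (pp (P g) s - pp (P g) s')
    have n3 := norm_sub_le (pp (P g) s) (pp (P g) s')
    have n4 := norm_sub_le (S s (T t g - P g) - S s (nn g t) - nn (P g) s)
        (S s' (T t g - P g) - S s' (nn g t) - nn (P g) s')
    have n5 := hWb s
    have n6 := hWb s'
    linarith
  -- the recursion
  have hREC : ∀ k : ℕ, ∀ g : E, 0 ≤ g → ∀ σ, 0 < σ →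
      Good g (2 * (1 - ε) ^ k * Lam g + σ) := by
    intro k
    induction k with
    | zero =>
      intro g hg σ hσ
      have := hBase g hg σ hσ
      apply hGoodMono g _ _ (by simp) this
    | succ k ih =>
      intro g hg σ hσ
      have hτ0 : 0 < σ / (12 * M) := by positivity
      set τ := σ / (12 * M) with hτdef
      have hστ : 12 * M * τ = σ := by rw [hτdef]; field_simp [hMpos.ne']
      -- choose t good
      have hev : ∀ᶠ t in l, ‖T t g - P g‖ < τ ∧ ‖nn g t‖ < τ := by
        filter_upwards [hEvT g τ hτ0, hEvN g hg τ hτ0] with t h1 h2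
        exact ⟨h1, h2⟩
      obtain ⟨t, ht1, ht2, ht3⟩ := ((hLam_freq g τ hτ0).and_eventually hev).exists
      have hq0 : 0 ≤ pp g t := hpp0 g t
      have hpow0 : (0:ℝ) ≤ (1 - ε) ^ k := pow_nonneg (by linarith) k
      have hpow1 : (1 - ε) ^ k ≤ 1 := pow_le_one₀ (by linarith) (by linarith)
      have hLq : Lam (pp g t) ≤ (1 - ε) * Lam g + 3 * M * τ := by
        have h1 := hII g hg t
        have h2 : ε * (Lam g - τ) ≤ ε * ‖pp g t‖ :=
          mul_le_mul_of_nonneg_left ht1 (le_of_lt hε)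
        have h3 : M * ‖T t g - P g‖ ≤ M * τ :=
          mul_le_mul_of_nonneg_left (le_of_lt ht2) (le_of_lt hMpos)
        have h4 : M * ‖nn g t‖ ≤ M * τ :=
          mul_le_mul_of_nonneg_left (le_of_lt ht3) (le_of_lt hMpos)
        have h5 : ε * τ ≤ M * τ := by nlinarith
        nlinarith
      have hGq : Good (pp g t) (2 * (1 - ε) ^ k * Lam (pp g t) + τ) := ih (pp g t) hq0 τ hτ0
      have harith : 2 * (1 - ε) ^ k * Lam (pp g t) + τ
          ≤ 2 * (1 - ε) ^ (k + 1) * Lam g + 6 * M * τ + τ := by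
        have h6 : 2 * (1 - ε) ^ k * Lam (pp g t)
            ≤ 2 * (1 - ε) ^ k * ((1 - ε) * Lam g + 3 * M * τ) := by
          apply mul_le_mul_of_nonneg_left hLq (by positivity)
        have h7 : 2 * (1 - ε) ^ k * ((1 - ε) * Lam g + 3 * M * τ)
            = 2 * (1 - ε) ^ (k+1) * Lam g + 6 * M * τ * (1 - ε) ^ k := by ring
        have h8 : 6 * M * τ * (1 - ε) ^ k ≤ 6 * M * τ := by nlinarith
        linarith
      have hGq2 := hGoodMono _ _ _ harith hGq
      have hres := hShift g t _ τ hg hτ0 hGq2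
      apply hGoodMono g _ _ ?_ hres
      have h9 : 2 * M * ‖T t g - P g‖ ≤ 2 * M * τ := by nlinarith
      have h10 : 2 * M * ‖nn g t‖ ≤ 2 * M * τ := by nlinarith
      have h11 : τ ≤ M * τ := by nlinarith
      linarith
  -- Cauchy for positive elements
  have hCauchy : ∀ f : E, 0 ≤ f → ∃ x, Tendsto (fun t => S t f) l (𝓝 x) := by
    intro f hf
    have hGoodAll : ∀ γ, 0 < γ → Good f γ := by
      intro γ hγ
      obtain ⟨k, hk⟩ : ∃ k : ℕ, 2 * (1 - ε) ^ k * Lam f < γ / 2 := by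
        have hlim : Tendsto (fun k : ℕ => 2 * (1 - ε) ^ k * Lam f) atTop (𝓝 0) := by
          have h0 : Tendsto (fun k : ℕ => (1 - ε) ^ k) atTop (𝓝 0) :=
            tendsto_pow_atTop_nhds_zero_of_lt_one (by linarith) (by linarith)
          have := (h0.const_mul 2).mul_const (Lam f)
          simpa using this
        exact (hlim.eventually (gt_mem_nhds (by positivity : (0:ℝ) < γ/2))).exists
      have := hREC k f hf (γ/2) (by positivity)
      exact hGoodMono f _ _ (by linarith) this
    have hCau : Cauchy (map (fun t => S t f) l) := by
      rw [cauchy_map_iff]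
      refine ⟨hNB, ?_⟩
      rw [Metric.uniformity_basis_dist.tendsto_right_iff]
      intro γ hγ
      have := hGoodAll (γ/2) (by positivity)
      refine this.mono fun z hz => ?_
      simp only [Set.mem_setOf_eq, dist_eq_norm]
      calc ‖S z.1 f - S z.2 f‖ ≤ γ / 2 := hz
      _ < γ := by linarith
    obtain ⟨x, hx⟩ := CompleteSpace.complete hCau
    exact ⟨x, hx⟩
  -- all elements
  have hEx : ∀ f : E, ∃ x, Tendsto (fun t => S t f) l (𝓝 x) := by
    intro f
    obtain ⟨x, hx⟩ := hCauchy f⁺ (posPart_nonneg f)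
    obtain ⟨y, hy⟩ := hCauchy f⁻ (negPart_nonneg f)
    refine ⟨x - y, ?_⟩
    have h := hx.sub hy
    have heq : (fun t => S t f⁺ - S t f⁻) = fun t => S t f := by
      funext t
      rw [← map_sub, posPart_sub_negPart]
    rwa [heq] at h
  choose q hq using hEx
  have hqadd : ∀ a b : E, q (a + b) = q a + q b := by
    intro a b
    refine tendsto_nhds_unique (hq (a + b)) ?_
    have h := (hq a).add (hq b)
    simpa only [← map_add] using h
  have hqsmul : ∀ (c : ℝ) (a : E), q (c • a) = c • q a := by
    intro c a
    refine tendsto_nhds_unique (hq (c • a)) ?_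
    have h := (hq a).const_smul c
    simpa only [← map_smul] using h
  refine ⟨LinearMap.mkContinuous
    { toFun := q, map_add' := hqadd, map_smul' := hqsmul } M
    (fun x => le_of_tendsto' (hq x).norm (fun t => hSnorm t x)) , ?_⟩
  intro f
  simpa using hq f




end Aux

/-- Let `(S_t)` and `(T_t)` be bounded positive semigroups on an AL-space such that `S`
asymptotically dominates `T`, i.e. `‖(S_t f - T_t f)⁻‖ → 0` for all positive `f`.  If
`(T_t)` converges strongly to an operator `P` with `‖Pf‖ ≥ ε ‖f‖` for all positive `f`
and some `ε > 0`, then `(S_t)` converges strongly as well.  Both the time-discrete case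
`J = ℕ` and the case `J = (0,∞)` are covered. -/
theorem dominating_semigroup_converges
    {E : Type*} [NormedAddCommGroup E] [Lattice E] [HasSolidNorm E] [IsOrderedAddMonoid E] [NormedSpace ℝ E] [CompleteSpace E]
    (hAL : ∀ f g : E, 0 ≤ f → 0 ≤ g → ‖f + g‖ = ‖f‖ + ‖g‖) :
    -- the time-discrete case `J = ℕ`
    (∀ S T : E →L[ℝ] E,
      (∀ f : E, 0 ≤ f → 0 ≤ S f) → (∃ M : ℝ, ∀ n : ℕ, ‖S ^ n‖ ≤ M) →
      (∀ f : E, 0 ≤ f → 0 ≤ T f) → (∃ M : ℝ, ∀ n : ℕ, ‖T ^ n‖ ≤ M) →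
      (∀ f : E, 0 ≤ f →
        Tendsto (fun n : ℕ => ‖((S ^ n) f - (T ^ n) f)⁻‖) atTop (𝓝 0)) →
      (∃ (P : E →L[ℝ] E) (ε : ℝ), 0 < ε ∧
        (∀ f : E, Tendsto (fun n : ℕ => (T ^ n) f) atTop (𝓝 (P f))) ∧
        (∀ f : E, 0 ≤ f → ε * ‖f‖ ≤ ‖P f‖)) →
      ∃ Q : E →L[ℝ] E, ∀ f : E, Tendsto (fun n : ℕ => (S ^ n) f) atTop (𝓝 (Q f))) ∧
    -- the case `J = (0, ∞)`
    (∀ S T : ℝ → E →L[ℝ] E,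
      (∀ s t : ℝ, 0 < s → 0 < t → S (s + t) = (S s).comp (S t)) →
      (∀ s t : ℝ, 0 < s → 0 < t → T (s + t) = (T s).comp (T t)) →
      (∀ t : ℝ, 0 < t → ∀ f : E, 0 ≤ f → 0 ≤ S t f) →
      (∃ M : ℝ, ∀ t : ℝ, 0 < t → ‖S t‖ ≤ M) →
      (∀ t : ℝ, 0 < t → ∀ f : E, 0 ≤ f → 0 ≤ T t f) →
      (∃ M : ℝ, ∀ t : ℝ, 0 < t → ‖T t‖ ≤ M) →
      (∀ f : E, 0 ≤ f →
        Tendsto (fun t : ℝ => ‖(S t f - T t f)⁻‖) atTop (𝓝 0)) →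
      (∃ (P : E →L[ℝ] E) (ε : ℝ), 0 < ε ∧
        (∀ f : E, Tendsto (fun t : ℝ => T t f) atTop (𝓝 (P f))) ∧
        (∀ f : E, 0 ≤ f → ε * ‖f‖ ≤ ‖P f‖)) →
      ∃ Q : E →L[ℝ] E, ∀ f : E, Tendsto (fun t : ℝ => S t f) atTop (𝓝 (Q f))) := by
  constructor
  · -- discrete case
    intro S T hSpos ⟨M₁, hM₁⟩ hTpos ⟨M₂, hM₂⟩ hdom ⟨P, ε, hε, hP, hPε⟩
    set M : ℝ := max (max M₁ M₂) 1 with hMdef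
    have hM1 : 1 ≤ M := le_max_right _ _
    have hpowpos : ∀ (A : E →L[ℝ] E), (∀ f : E, 0 ≤ f → 0 ≤ A f) →
        ∀ (n : ℕ) (f : E), 0 ≤ f → 0 ≤ (A ^ n) f := by
      intro A hA n
      induction n with
      | zero => intro f hf; simpa using hf
      | succ n ih =>
        intro f hf
        rw [pow_succ]
        simpa only [ContinuousLinearMap.mul_apply] using ih (A f) (hA f hf)
    have Hsur : ∀ t : ℕ, ∀ A ∈ (atTop : Filter ℕ), {u | ∃ s ∈ A, u = s + t} ∈ atTop := by
      intro t A hA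
      obtain ⟨n₀, hn₀⟩ := mem_atTop_sets.mp hA
      refine mem_atTop_sets.mpr ⟨n₀ + t, fun u hu => ?_⟩
      exact ⟨u - t, hn₀ (u - t) (by omega), by omega⟩
    have Hl2 : ∀ t : ℕ, Tendsto (fun s => t + s) atTop (atTop : Filter ℕ) := by
      intro t
      simpa [Nat.add_comm] using tendsto_add_atTop_nat t
    refine key hAL atTop (· + ·) (fun t => tendsto_add_atTop_nat t) Hl2 Hsur
      (fun n => S ^ n) (fun n => T ^ n)
      (fun s t => by show S ^ (s + t) = (S ^ s).comp (S ^ t); rw [pow_add]; rfl)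
      (fun s t => by show T ^ (s + t) = (T ^ s).comp (T ^ t); rw [pow_add]; rfl)
      (hpowpos S hSpos) (hpowpos T hTpos) hM1
      (fun n => le_trans (hM₁ n) (le_trans (le_max_left _ _) (le_max_left _ _)))
      (fun n => le_trans (hM₂ n) (le_trans (le_max_right _ _) (le_max_left _ _)))
      hdom (lt_min hε one_pos) (min_le_right _ _) hP ?_
    intro f hf
    exact le_trans (mul_le_mul_of_nonneg_right (min_le_left ε 1) (norm_nonneg f)) (hPε f hf)
  · -- continuous case
    intro S T hSsem hTsem hSpos ⟨M₁, hM₁⟩ hTpos ⟨M₂, hM₂⟩ hdom ⟨P, ε, hε, hP, hPε⟩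
    set J := {t : ℝ // 0 < t} with hJdef
    set l : Filter J := comap Subtype.val atTop with hldef
    have hNB : l.NeBot := by
      rw [hldef, comap_neBot_iff]
      intro B hB
      obtain ⟨a, ha⟩ := mem_atTop_sets.mp hB
      refine ⟨⟨max a 0 + 1, by positivity⟩, ha _ ?_⟩
      show a ≤ max a 0 + 1
      have := le_max_left a 0
      linarith
    have hval : Tendsto (Subtype.val : J → ℝ) l atTop := tendsto_comap
    have hmap : map (Subtype.val : J → ℝ) l = atTop := by
      rw [hldef, Filter.map_comap, Subtype.range_coe_subtype]
      exact inf_eq_left.mpr (le_principal_iff.mpr (Ioi_mem_atTop 0))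
    set addJ : J → J → J := fun a b => ⟨a.1 + b.1, add_pos a.2 b.2⟩ with haddJ
    have Hl : ∀ t : J, Tendsto (fun s => addJ s t) l l := by
      intro t
      rw [hldef, tendsto_comap_iff]
      exact tendsto_atTop_add_const_right _ t.1 hval
    have Hl2 : ∀ t : J, Tendsto (fun s => addJ t s) l l := by
      intro t
      rw [hldef, tendsto_comap_iff]
      exact tendsto_atTop_add_const_left _ t.1 hval
    have Hsur : ∀ t : J, ∀ A ∈ l, {u | ∃ s ∈ A, u = addJ s t} ∈ l := by
      intro t A hA
      rw [hldef, mem_comap] at hA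
      obtain ⟨B, hB, hBA⟩ := hA
      obtain ⟨a, ha⟩ := mem_atTop_sets.mp hB
      have hmem : Subtype.val ⁻¹' (Set.Ici (max a 0 + t.1 + 1)) ∈ l := by
        rw [hldef]
        exact preimage_mem_comap (Ici_mem_atTop _)
      refine mem_of_superset hmem ?_
      intro u hu
      have hu' : max a 0 + t.1 + 1 ≤ u.1 := hu
      have hs0 : 0 < u.1 - t.1 := by
        have := le_max_right a 0; linarith
      refine ⟨⟨u.1 - t.1, hs0⟩, hBA (ha _ (by
        simp only [Set.mem_preimage]
        have := le_max_left a 0; linarith)), ?_⟩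
      rw [haddJ]
      apply Subtype.ext
      simp
    set M : ℝ := max (max M₁ M₂) 1 with hMdef
    have hM1 : 1 ≤ M := le_max_right _ _
    haveI := hNB
    obtain ⟨Q, hQ⟩ := key hAL l addJ Hl Hl2 Hsur
      (fun u : J => S u.1) (fun u : J => T u.1)
      (fun s t => hSsem s.1 t.1 s.2 t.2) (fun s t => hTsem s.1 t.1 s.2 t.2)
      (fun u => hSpos u.1 u.2) (fun u => hTpos u.1 u.2) hM1
      (fun u => le_trans (hM₁ u.1 u.2) (le_trans (le_max_left _ _) (le_max_left _ _)))
      (fun u => le_trans (hM₂ u.1 u.2) (le_trans (le_max_right _ _) (le_max_left _ _)))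
      (fun f hf => (hdom f hf).comp hval) (lt_min hε one_pos) (min_le_right _ _)
      (fun f => (hP f).comp hval)
      (fun f hf => le_trans (mul_le_mul_of_nonneg_right (min_le_left ε 1) (norm_nonneg f))
        (hPε f hf))
    refine ⟨Q, fun f => ?_⟩
    rw [← hmap, tendsto_map'_iff]
    exact hQ f
end
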